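/- arXiv:1012.2540 — 3 statements merged into one kernel-verified Lean document; each statement's English description precedes it below -/
import Mathlib

section
/- Let H be a Hopf algebra over a field k and let M and N be normal Hopf subalgebras of H such that M ∩ N = k·1. Then mn = nm for all m ∈ M and n ∈ N. -/
open scoped TensorProduct

/-- The linear map `h ↦ h₁ a S(h₂)` (Sweedler notation), used to express normality
of a Hopf subalgebra. -/
noncomputable def adjL (k : Type*) {H : Type*} [CommRing k] [Ring H] [HopfAlgebra k H]
    (a : H) : H →ₗ[k] H :=
  (TensorProduct.lift (((LinearMap.mul k H).comp (LinearMap.mulRight k a)).compl₂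
    (HopfAlgebra.antipode (R := k)))) ∘ₗ Coalgebra.comul

/-- The linear map `h ↦ S(h₁) a h₂` (Sweedler notation). -/
noncomputable def adjR (k : Type*) {H : Type*} [CommRing k] [Ring H] [HopfAlgebra k H]
    (a : H) : H →ₗ[k] H :=
  (TensorProduct.lift ((LinearMap.mul k H).comp
    ((LinearMap.mulRight k a).comp (HopfAlgebra.antipode (R := k))))) ∘ₗ Coalgebra.comul

/-- A subalgebra `A` of a Hopf algebra `H` is a Hopf subalgebra if the comultiplication
maps `A` into `A ⊗ A` (viewed inside `H ⊗ H`) and the antipode maps `A` into `A`. -/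
def IsHopfSubalgebra (k : Type*) {H : Type*} [CommRing k] [Ring H] [HopfAlgebra k H]
    (A : Subalgebra k H) : Prop :=
  (∀ a ∈ A, Coalgebra.comul (R := k) a ∈
    LinearMap.range (TensorProduct.mapIncl (Subalgebra.toSubmodule A)
      (Subalgebra.toSubmodule A))) ∧
  ∀ a ∈ A, HopfAlgebra.antipode (R := k) a ∈ A

/-- A Hopf subalgebra `A` of `H` is normal if `h₁ a S(h₂) ∈ A` and `S(h₁) a h₂ ∈ A`
for all `h ∈ H` and `a ∈ A`. -/
def IsNormalHopfSubalgebra (k : Type*) {H : Type*} [CommRing k] [Ring H] [HopfAlgebra k H]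
    (A : Subalgebra k H) : Prop :=
  IsHopfSubalgebra k A ∧ ∀ a ∈ A, ∀ h : H, adjL k a h ∈ A ∧ adjR k a h ∈ A

section Aux

open TensorProduct LinearMap

variable {k H : Type*} [Field k] [Ring H] [HopfAlgebra k H]

private lemma aux_rep {P : Submodule k H} {x : H ⊗[k] H}
    (hx : x ∈ LinearMap.range (TensorProduct.mapIncl P P)) :
    ∃ T : Finset (P × P), x = ∑ z ∈ T, ((z.1 : H) ⊗ₜ[k] (z.2 : H)) := by
  obtain ⟨w, rfl⟩ := hx
  obtain ⟨T, hT⟩ := TensorProduct.exists_finset (R := k) w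
  refine ⟨T, ?_⟩
  rw [hT, map_sum]
  simp [TensorProduct.mapIncl]

private lemma aux_keyI {ι κ : Type*} (h : H) (T : Finset ι) (f g : ι → H)
    (hT : Coalgebra.comul (R := k) h = ∑ z ∈ T, f z ⊗ₜ[k] g z)
    (G : ι → Finset κ) (f' g' : ι → κ → H)
    (hG : ∀ z ∈ T, Coalgebra.comul (R := k) (f z) = ∑ y ∈ G z, f' z y ⊗ₜ[k] g' z y) :
    ∑ z ∈ T, ∑ y ∈ G z, f' z y ⊗ₜ[k] (HopfAlgebra.antipode (R := k) (g' z y) * g z)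
      = h ⊗ₜ[k] (1 : H) := by
  set S : H →ₗ[k] H := HopfAlgebra.antipode (R := k) with hS
  set L : H ⊗[k] H →ₗ[k] H ⊗[k] H :=
    (LinearMap.lTensor H (LinearMap.mul' k H ∘ₗ LinearMap.rTensor H S)) ∘ₗ
      ((TensorProduct.assoc k H H H).toLinearMap ∘ₗ
        (LinearMap.rTensor H (Coalgebra.comul (R := k)))) with hL
  have h1 : L (Coalgebra.comul (R := k) h)
      = ∑ z ∈ T, ∑ y ∈ G z, f' z y ⊗ₜ[k] (S (g' z y) * g z) := by
    rw [hT, map_sum]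
    refine Finset.sum_congr rfl fun z hz => ?_
    rw [hL]
    simp only [LinearMap.comp_apply, LinearEquiv.coe_coe, LinearMap.rTensor_tmul, hG z hz,
      TensorProduct.sum_tmul, map_sum, TensorProduct.assoc_tmul, LinearMap.lTensor_tmul,
      LinearMap.mul'_apply]
  have h2 : L (Coalgebra.comul (R := k) h) = h ⊗ₜ[k] (1 : H) := by
    rw [hL]
    simp only [LinearMap.comp_apply, LinearEquiv.coe_coe]
    rw [Coalgebra.coassoc_apply, ← LinearMap.lTensor_comp_apply, LinearMap.comp_assoc,
      hS, HopfAlgebra.mul_antipode_rTensor_comul, LinearMap.lTensor_comp_apply,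
      Coalgebra.lTensor_counit_comul]
    simp [Algebra.linearMap_apply]
  rw [← h1, h2]

private lemma aux_keyC {ι : Type*} (h : H) (T : Finset ι) (f g : ι → H)
    (hT : Coalgebra.comul (R := k) h = ∑ z ∈ T, f z ⊗ₜ[k] g z) :
    ∑ z ∈ T, Coalgebra.counit (R := k) (f z) • g z = h := by
  have := congrArg (fun t => (TensorProduct.lid k H)
    ((LinearMap.rTensor H (Coalgebra.counit (R := k))) t)) hT
  simp only [Coalgebra.rTensor_counit_comul, map_sum, LinearMap.rTensor_tmul,
    TensorProduct.lid_tmul] at this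
  exact this.symm.trans (by simp)

private lemma aux_keyC2 {ι : Type*} (h : H) (T : Finset ι) (f g : ι → H)
    (hT : Coalgebra.comul (R := k) h = ∑ z ∈ T, f z ⊗ₜ[k] g z) :
    ∑ z ∈ T, Coalgebra.counit (R := k) (f z) * Coalgebra.counit (R := k) (g z)
      = Coalgebra.counit (R := k) h := by
  have := congrArg (Coalgebra.counit (R := k)) (aux_keyC h T f g hT)
  simp only [map_sum, map_smul, smul_eq_mul] at this
  exact this

private lemma aux_counit_antipode (x : H) :
    Coalgebra.counit (R := k) (HopfAlgebra.antipode (R := k) x)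
      = Coalgebra.counit (R := k) x := by
  classical
  set r := Coalgebra.Repr.arbitrary k x
  have h1 : ∑ i ∈ r.index, Coalgebra.counit (R := k) (r.right i) • r.left i = x := by
    have e1 := congrArg (TensorProduct.rid k H) (Coalgebra.sum_tmul_counit_eq (R := k) r)
    rw [map_sum] at e1
    simp only [TensorProduct.rid_tmul, one_smul] at e1
    exact e1
  have h2 := HopfAlgebra.sum_antipode_mul_eq_algebraMap_counit (R := k) r
  have h3 : ∑ i ∈ r.index, Coalgebra.counit (R := k)
      (HopfAlgebra.antipode (R := k) (r.left i)) * Coalgebra.counit (R := k) (r.right i)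
      = Coalgebra.counit (R := k) x := by
    have e2 := congrArg (Coalgebra.counit (R := k)) h2
    rw [map_sum] at e2
    simp only [Bialgebra.counit_mul, Algebra.algebraMap_eq_smul_one, map_smul,
      Bialgebra.counit_one, smul_eq_mul, mul_one] at e2
    exact e2
  have e4 := congrArg (fun y => Coalgebra.counit (R := k) (HopfAlgebra.antipode (R := k) y)) h1
  simp only [map_sum, map_smul, smul_eq_mul] at e4
  rw [← e4, ← h3]
  exact Finset.sum_congr rfl fun i _ => mul_comm _ _

private lemma aux_adjL (a h : H) {ι : Type*} (T : Finset ι) (f g : ι → H)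
    (hT : Coalgebra.comul (R := k) h = ∑ z ∈ T, f z ⊗ₜ[k] g z) :
    adjL k a h = ∑ z ∈ T, (f z * a * HopfAlgebra.antipode (R := k) (g z)) := by
  simp only [adjL, LinearMap.comp_apply, hT, map_sum, TensorProduct.lift.tmul,
    LinearMap.compl₂_apply, LinearMap.comp_apply, LinearMap.mulRight_apply,
    LinearMap.mul_apply']

end Aux

/-- If `M` and `N` are normal Hopf subalgebras of `H` with `M ∩ N = k·1`, then
`mn = nm` for all `m ∈ M` and `n ∈ N`. -/
theorem stmt1 {k H : Type*} [Field k] [Ring H] [HopfAlgebra k H]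
    (M N : Subalgebra k H) (hM : IsNormalHopfSubalgebra k M) (hN : IsNormalHopfSubalgebra k N)
    (hMN : M ⊓ N = ⊥) :
    ∀ m ∈ M, ∀ n ∈ N, m * n = n * m := by
  classical
  intro m hm n hn
  set S : H →ₗ[k] H := HopfAlgebra.antipode (R := k) with hSdef
  set ε : H →ₗ[k] k := Coalgebra.counit (R := k) with hεdef
  obtain ⟨Tm, hTm⟩ := aux_rep (hM.1.1 m hm)
  obtain ⟨Tn, hTn⟩ := aux_rep (hN.1.1 n hn)
  have hMrep : ∀ x : Subalgebra.toSubmodule M,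
      ∃ T : Finset (Subalgebra.toSubmodule M × Subalgebra.toSubmodule M),
        Coalgebra.comul (R := k) (x : H) = ∑ z ∈ T, ((z.1 : H) ⊗ₜ[k] (z.2 : H)) :=
    fun x => aux_rep (hM.1.1 x ((Subalgebra.mem_toSubmodule _).mp x.2))
  have hNrep : ∀ x : Subalgebra.toSubmodule N,
      ∃ T : Finset (Subalgebra.toSubmodule N × Subalgebra.toSubmodule N),
        Coalgebra.comul (R := k) (x : H) = ∑ z ∈ T, ((z.1 : H) ⊗ₜ[k] (z.2 : H)) :=
    fun x => aux_rep (hN.1.1 x ((Subalgebra.mem_toSubmodule _).mp x.2))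
  choose gM hgM using hMrep
  choose gN hgN using hNrep
  set u : H ⊗[k] H := ∑ z ∈ Tm, ∑ y ∈ gM z.1, ∑ w ∈ Tn, ∑ v ∈ gN w.1,
    ((y.1 : H) * (v.1 : H) * S (y.2 : H) * S (v.2 : H)) ⊗ₜ[k] ((w.2 : H) * (z.2 : H))
    with hu
  clear_value u
  have Km := aux_keyI (k := k) m Tm _ _ hTm (fun z => gM z.1)
    (fun z y => (y.1 : H)) (fun z y => (y.2 : H)) (fun z _ => hgM z.1)
  have Kn := aux_keyI (k := k) n Tn _ _ hTn (fun w => gN w.1)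
    (fun w v => (v.1 : H)) (fun w v => (v.2 : H)) (fun w _ => hgN w.1)
  -- (1) multiplication of u gives m * n
  have hmul : LinearMap.mul' k H u = m * n := by
    have inner : ∀ a b c : H,
        ∑ w ∈ Tn, ∑ v ∈ gN w.1, (a * (v.1 : H) * b) * ((S (v.2 : H) * (w.2 : H)) * c)
          = (a * n * b) * (1 * c) := by
      intro a b c
      have e := congrArg (fun t => (LinearMap.mul' k H)
        ((TensorProduct.map ((LinearMap.mulRight k b) ∘ₗ (LinearMap.mulLeft k a))
          (LinearMap.mulRight k c)) t)) Kn
      simpa only [map_sum, TensorProduct.map_tmul, LinearMap.comp_apply,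
        LinearMap.mulLeft_apply, LinearMap.mulRight_apply, LinearMap.mul'_apply] using e
    have step1 : LinearMap.mul' k H u
        = ∑ z ∈ Tm, ∑ y ∈ gM z.1, (((y.1 : H) * n * S (y.2 : H)) * (1 * (z.2 : H))) := by
      rw [hu]
      simp only [map_sum, LinearMap.mul'_apply]
      refine Finset.sum_congr rfl fun z _ => Finset.sum_congr rfl fun y _ => ?_
      rw [← inner (y.1 : H) (S (y.2 : H)) (z.2 : H)]
      refine Finset.sum_congr rfl fun w _ => Finset.sum_congr rfl fun v _ => ?_
      simp only [mul_assoc]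
    have e2 := congrArg (fun t => (LinearMap.mul' k H)
      ((TensorProduct.map ((LinearMap.mulRight k n) ∘ₗ (LinearMap.mulLeft k (1 : H)))
        (LinearMap.mulRight k (1 : H))) t)) Km
    simp only [map_sum, TensorProduct.map_tmul, LinearMap.comp_apply,
      LinearMap.mulLeft_apply, LinearMap.mulRight_apply, LinearMap.mul'_apply,
      one_mul, mul_one] at e2
    rw [step1]
    simp only [one_mul]
    rw [← e2]
    exact Finset.sum_congr rfl fun z _ => Finset.sum_congr rfl fun y _ => by
      simp only [mul_assoc, hSdef]
  -- (2) the counit-smul map applied to u gives n * m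
  set Phi : H ⊗[k] H →ₗ[k] H := TensorProduct.lift ((LinearMap.lsmul k H) ∘ₗ ε) with hPhi
  have hsm : Phi u = n * m := by
    have expand : Phi u = ∑ z ∈ Tm, ∑ y ∈ gM z.1, ∑ w ∈ Tn, ∑ v ∈ gN w.1,
        ((ε (y.1 : H) * ε (y.2 : H)) * (ε (v.1 : H) * ε (v.2 : H)))
          • ((w.2 : H) * (z.2 : H)) := by
      rw [hu]
      simp only [map_sum, hPhi, TensorProduct.lift.tmul, LinearMap.comp_apply,
        LinearMap.lsmul_apply, hεdef, Bialgebra.counit_mul, hSdef, aux_counit_antipode]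
      refine Finset.sum_congr rfl fun z _ => Finset.sum_congr rfl fun y _ =>
        Finset.sum_congr rfl fun w _ => Finset.sum_congr rfl fun v _ => ?_
      congr 1
      ring
    rw [expand]
    have hswap : ∀ z : Subalgebra.toSubmodule M × Subalgebra.toSubmodule M,
        ∑ y ∈ gM z.1, ∑ w ∈ Tn, ∑ v ∈ gN w.1,
          ((ε (y.1 : H) * ε (y.2 : H)) * (ε (v.1 : H) * ε (v.2 : H)))
            • ((w.2 : H) * (z.2 : H))
        = ∑ w ∈ Tn, (ε (z.1 : H) * ε (w.1 : H)) • ((w.2 : H) * (z.2 : H)) := by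
      intro z
      rw [Finset.sum_comm]
      refine Finset.sum_congr rfl fun w _ => ?_
      have hy := aux_keyC2 (k := k) (z.1 : H) (gM z.1) _ _ (hgM z.1)
      have hv := aux_keyC2 (k := k) (w.1 : H) (gN w.1) _ _ (hgN w.1)
      rw [← hy, ← hv, Finset.sum_mul_sum, Finset.sum_smul]
      refine Finset.sum_congr rfl fun y _ => ?_
      rw [Finset.sum_smul]
    rw [Finset.sum_congr rfl fun z _ => hswap z]
    have hn' := aux_keyC (k := k) n Tn _ _ hTn
    have hm' := aux_keyC (k := k) m Tm _ _ hTm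
    rw [← hn', ← hm', Finset.sum_mul_sum, Finset.sum_comm]
    refine Finset.sum_congr rfl fun z _ => Finset.sum_congr rfl fun w _ => ?_
    rw [smul_mul_smul_comm, mul_comm (ε (w.1 : H)) (ε (z.1 : H))]
  -- (3) u lies in N ⊗ H
  have humem_N : u ∈ LinearMap.range
      (((Subalgebra.toSubmodule N).subtype).rTensor H) := by
    rw [hu]
    refine Submodule.sum_mem _ fun z _ => ?_
    rw [Finset.sum_comm]
    refine Submodule.sum_mem _ fun w _ => ?_
    rw [Finset.sum_comm]
    refine Submodule.sum_mem _ fun v _ => ?_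
    have hterm : ∑ y ∈ gM z.1,
        (((y.1 : H) * (v.1 : H) * S (y.2 : H) * S (v.2 : H)) ⊗ₜ[k] ((w.2 : H) * (z.2 : H)))
        = ((adjL k (v.1 : H) (z.1 : H) * S (v.2 : H)) ⊗ₜ[k] ((w.2 : H) * (z.2 : H))) := by
      rw [← TensorProduct.sum_tmul]
      congr 1
      rw [aux_adjL (k := k) (v.1 : H) (z.1 : H) (gM z.1) _ _ (hgM z.1), Finset.sum_mul]
    rw [hterm]
    have hmem : (adjL k (v.1 : H) (z.1 : H) * S (v.2 : H) : H) ∈ Subalgebra.toSubmodule N := by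
      refine (Subalgebra.mem_toSubmodule _).mpr (mul_mem ?_ ?_)
      · exact (hN.2 (v.1 : H) ((Subalgebra.mem_toSubmodule _).mp v.1.2) (z.1 : H)).1
      · exact hN.1.2 (v.2 : H) ((Subalgebra.mem_toSubmodule _).mp v.2.2)
    exact ⟨(⟨_, hmem⟩ : Subalgebra.toSubmodule N) ⊗ₜ[k] ((w.2 : H) * (z.2 : H)), by simp⟩
  -- (4) u lies in M ⊗ H
  have humem_M : u ∈ LinearMap.range
      (((Subalgebra.toSubmodule M).subtype).rTensor H) := by
    rw [hu]
    refine Submodule.sum_mem _ fun z _ => Submodule.sum_mem _ fun y _ =>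
      Submodule.sum_mem _ fun w _ => ?_
    have hterm : ∑ v ∈ gN w.1,
        (((y.1 : H) * (v.1 : H) * S (y.2 : H) * S (v.2 : H)) ⊗ₜ[k] ((w.2 : H) * (z.2 : H)))
        = (((y.1 : H) * adjL k (S (y.2 : H)) (w.1 : H)) ⊗ₜ[k] ((w.2 : H) * (z.2 : H))) := by
      rw [← TensorProduct.sum_tmul]
      congr 1
      rw [aux_adjL (k := k) (S (y.2 : H)) (w.1 : H) (gN w.1) _ _ (hgN w.1), Finset.mul_sum]
      exact Finset.sum_congr rfl fun v _ => by simp only [mul_assoc, hSdef]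
    rw [hterm]
    have hmem : ((y.1 : H) * adjL k (S (y.2 : H)) (w.1 : H) : H)
        ∈ Subalgebra.toSubmodule M := by
      refine (Subalgebra.mem_toSubmodule _).mpr (mul_mem ((Subalgebra.mem_toSubmodule _).mp y.1.2) ?_)
      exact (hM.2 (S (y.2 : H)) (hM.1.2 (y.2 : H) ((Subalgebra.mem_toSubmodule _).mp y.2.2))
        (w.1 : H)).1
    exact ⟨(⟨_, hmem⟩ : Subalgebra.toSubmodule M) ⊗ₜ[k] ((w.2 : H) * (z.2 : H)), by simp⟩
  -- (5) conclude using a basis of H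
  set B : Module.Basis (Module.Basis.ofVectorSpaceIndex k H) k H := Module.Basis.ofVectorSpace k H with hB
  set E : H ⊗[k] H ≃ₗ[k] (Module.Basis.ofVectorSpaceIndex k H →₀ H) :=
    TensorProduct.equivFinsuppOfBasisRight B with hE
  have hC1 : ∀ (P : Submodule k H) (t : H ⊗[k] H),
      t ∈ LinearMap.range ((Submodule.subtype P).rTensor H) → ∀ i, E t i ∈ P := by
    rintro P t ⟨s, rfl⟩ i
    induction s using TensorProduct.induction_on with
    | zero => simp
    | tmul p c =>
      rw [LinearMap.rTensor_tmul, hE,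
        TensorProduct.equivFinsuppOfBasisRight_apply_tmul_apply]
      exact P.smul_mem _ (by simpa using p.2)
    | add a b ha hb =>
      rw [map_add, map_add, Finsupp.add_apply]
      exact P.add_mem ha hb
  have hu2 : u = ∑ i ∈ (E u).support, (E u i) ⊗ₜ[k] (B i) := by
    conv_lhs => rw [← E.symm_apply_apply u]
    rw [hE, TensorProduct.equivFinsuppOfBasisRight_symm_apply]
    rfl
  have key : ∀ i, ∃ c : k, (algebraMap k H) c = E u i := by
    intro i
    have h1 : E u i ∈ M := (Subalgebra.mem_toSubmodule _).mp (hC1 _ _ humem_M i)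
    have h2 : E u i ∈ N := (Subalgebra.mem_toSubmodule _).mp (hC1 _ _ humem_N i)
    have h3 : E u i ∈ M ⊓ N := ⟨h1, h2⟩
    rw [hMN] at h3
    exact Algebra.mem_bot.mp h3
  calc m * n = LinearMap.mul' k H u := hmul.symm
    _ = ∑ i ∈ (E u).support, (E u i) * (B i) := by
        conv_lhs => rw [hu2]
        rw [map_sum]
        simp only [LinearMap.mul'_apply]
    _ = ∑ i ∈ (E u).support, ε (E u i) • (B i) := by
        refine Finset.sum_congr rfl fun i _ => ?_
        obtain ⟨c, hc⟩ := key i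
        rw [← hc, hεdef]
        simp [Algebra.algebraMap_eq_smul_one, smul_mul_assoc]
    _ = Phi u := by
        conv_rhs => rw [hu2]
        conv_rhs => rw [map_sum]
        simp only [hPhi, TensorProduct.lift.tmul, LinearMap.comp_apply, LinearMap.lsmul_apply]
    _ = n * m := hsm
end

section
/- Let H be a Hopf algebra over a field k and let A and L be normal Hopf subalgebras of H such that the multiplication map m : A ⊗ L → H, a ⊗ l ↦ al, is a linear isomorphism. Then m is an isomorphism of Hopf algebras, where A ⊗ L carries the tensor product Hopf algebra structure (componentwise multiplication, tensor product coalgebra structure, and antipode S_A ⊗ S_L). -/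
open scoped TensorProduct

universe u


section AuxDefs
variable {k H : Type*} [CommRing k] [Ring H] [HopfAlgebra k H]

open Coalgebra HopfAlgebra TensorProduct LinearMap

variable (k H) in
/-- `(q⊗r)⊗(t⊗w) ↦ (S q * S t) * (w * r)`. -/
noncomputable def ψmap : ((H ⊗[k] H) ⊗[k] (H ⊗[k] H)) →ₗ[k] H :=
  (LinearMap.mul' k H) ∘ₗ
  (TensorProduct.map ((LinearMap.mul' k H) ∘ₗ TensorProduct.map (antipode k) (antipode k))
    (LinearMap.mul' k H)) ∘ₗ
  (LinearMap.lTensor (H ⊗[k] H) (TensorProduct.comm k H H).toLinearMap) ∘ₗ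
  (TensorProduct.tensorTensorTensorComm k H H H H).toLinearMap

@[simp] lemma ψmap_tmul (q r t w : H) :
    ψmap k H ((q ⊗ₜ[k] r) ⊗ₜ[k] (t ⊗ₜ[k] w)) =
      (antipode (R := k) q * antipode (R := k) t) * (w * r) := by
  simp [ψmap]

variable (k H) in
/-- `(x⊗α)⊗(u⊗β) ↦ (x*u) * ψ(α⊗β)`. -/
noncomputable def Fmap : ((H ⊗[k] (H ⊗[k] H)) ⊗[k] (H ⊗[k] (H ⊗[k] H))) →ₗ[k] H :=
  (LinearMap.mul' k H) ∘ₗ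
  (TensorProduct.map (LinearMap.mul' k H) (ψmap k H)) ∘ₗ
  (TensorProduct.tensorTensorTensorComm k H (H ⊗[k] H) H (H ⊗[k] H)).toLinearMap

@[simp] lemma Fmap_tmul (x u : H) (α β : H ⊗[k] H) :
    Fmap k H ((x ⊗ₜ[k] α) ⊗ₜ[k] (u ⊗ₜ[k] β)) = (x * u) * ψmap k H (α ⊗ₜ[k] β) := by
  simp [Fmap]

variable (k H) in
/-- `a⊗l ↦ ∑ (a₁ * l₁) * (S a₂ * S l₂)`. -/
noncomputable def γmap : (H ⊗[k] H) →ₗ[k] H :=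
  (LinearMap.mul' k H) ∘ₗ
  (TensorProduct.map (LinearMap.mul' k H)
    ((LinearMap.mul' k H) ∘ₗ TensorProduct.map (antipode k) (antipode k))) ∘ₗ
  (TensorProduct.tensorTensorTensorComm k H H H H).toLinearMap ∘ₗ
  (TensorProduct.map Coalgebra.comul Coalgebra.comul)

lemma γmap_tmul {ι κ : Type*} (a l : H) (ra : Coalgebra.Repr k a ι) (rl : Coalgebra.Repr k l κ) :
    γmap k H (a ⊗ₜ[k] l) = ∑ i ∈ ra.index, ∑ j ∈ rl.index,
      (ra.left i * rl.left j) *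
        (antipode (R := k) (ra.right i) * antipode (R := k) (rl.right j)) := by
  simp only [γmap, LinearMap.comp_apply, TensorProduct.map_tmul, ← ra.eq, ← rl.eq]
  simp [TensorProduct.sum_tmul, TensorProduct.tmul_sum, Finset.mul_sum, Finset.sum_mul]
  exact Finset.sum_comm

variable (k) in
/-- The canonical "sandwich" element `∑ a₁ l₁ S(a₂) S(l₂) l₃ a₃`. -/
noncomputable def Emap (a l : H) : H :=
  Fmap k H (((Coalgebra.comul (R := k)).lTensor H (Coalgebra.comul a)) ⊗ₜ[k]
    ((Coalgebra.comul (R := k)).lTensor H (Coalgebra.comul l)))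

lemma sum_counit_right_smul {ι : Type*} {a : H} (r : Coalgebra.Repr k a ι) :
    ∑ i ∈ r.index, counit (R := k) (r.right i) • r.left i = a := by
  calc ∑ i ∈ r.index, counit (R := k) (r.right i) • r.left i
      = TensorProduct.rid k H (∑ i ∈ r.index, r.left i ⊗ₜ[k] counit (R := k) (r.right i)) := by
        rw [map_sum]; rfl
    _ = TensorProduct.rid k H (a ⊗ₜ[k] 1) := by rw [Coalgebra.sum_tmul_counit_eq r]
    _ = a := by simp

lemma sum_counit_left_smul {ι : Type*} {a : H} (r : Coalgebra.Repr k a ι) :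
    ∑ i ∈ r.index, counit (R := k) (r.left i) • r.right i = a := by
  calc ∑ i ∈ r.index, counit (R := k) (r.left i) • r.right i
      = TensorProduct.lid k H (∑ i ∈ r.index, counit (R := k) (r.left i) ⊗ₜ[k] r.right i) := by
        rw [map_sum]; rfl
    _ = TensorProduct.lid k H ((1 : k) ⊗ₜ[k] a) := by rw [Coalgebra.sum_counit_tmul_eq r]
    _ = a := by simp

lemma sum_counit_mul_counit_right {ι : Type*} {a : H} (r : Coalgebra.Repr k a ι) :
    ∑ i ∈ r.index, counit (R := k) (r.left i) * counit (R := k) (r.right i)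
      = counit (R := k) a := by
  have := congrArg (counit (R := k)) (sum_counit_left_smul r)
  simpa [map_sum] using this

lemma counit_antipode' (a : H) :
    counit (R := k) (antipode (R := k) a) = counit (R := k) a := by
  obtain r := Coalgebra.Repr.arbitrary k a
  have h1 := congrArg (counit (R := k)) (HopfAlgebra.sum_antipode_mul_eq_algebraMap_counit r)
  rw [map_sum, Bialgebra.counit_algebraMap] at h1
  have h2 : ∑ i ∈ r.index, counit (R := k) (antipode (R := k) (r.left i)) *
      counit (R := k) (r.right i) = counit (R := k) a := by
    rw [← h1]; exact Finset.sum_congr rfl fun i _ => by rw [Bialgebra.counit_mul]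
  calc counit (R := k) (antipode (R := k) a)
      = counit (R := k) (antipode (R := k)
          (∑ i ∈ r.index, counit (R := k) (r.right i) • r.left i)) := by
        rw [sum_counit_right_smul]
    _ = ∑ i ∈ r.index, counit (R := k) (antipode (R := k) (r.left i)) *
          counit (R := k) (r.right i) := by
        rw [map_sum, map_sum]
        exact Finset.sum_congr rfl fun i _ => by rw [map_smul, map_smul, smul_eq_mul, mul_comm]
    _ = counit (R := k) a := h2

lemma adjL_repr {ι : Type*} (a : H) {h : H} (r : Coalgebra.Repr k h ι) :
    adjL k a h = ∑ i ∈ r.index, r.left i * a * antipode (R := k) (r.right i) := by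
  simp only [adjL, LinearMap.comp_apply, ← r.eq, map_sum]
  simp

lemma ψmap_comul (y v : H) :
    ψmap k H ((Coalgebra.comul (R := k) y) ⊗ₜ[k] (Coalgebra.comul (R := k) v)) =
      (counit (R := k) y * counit (R := k) v) • (1 : H) := by
  obtain ry := Coalgebra.Repr.arbitrary k y
  obtain rv := Coalgebra.Repr.arbitrary k v
  rw [← ry.eq, ← rv.eq, TensorProduct.sum_tmul, map_sum]
  have inner : ∀ i ∈ ry.index, ψmap k H ((ry.left i ⊗ₜ[k] ry.right i) ⊗ₜ[k]
      (∑ j ∈ rv.index, rv.left j ⊗ₜ[k] rv.right j)) =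
      counit (R := k) v • (antipode (R := k) (ry.left i) * ry.right i) := by
    intro i _
    rw [TensorProduct.tmul_sum, map_sum]
    simp only [ψmap_tmul]
    calc ∑ j ∈ rv.index, (antipode (R := k) (ry.left i) * antipode (R := k) (rv.left j)) *
          (rv.right j * ry.right i)
        = antipode (R := k) (ry.left i) *
            ((∑ j ∈ rv.index, antipode (R := k) (rv.left j) * rv.right j) * ry.right i) := by
          rw [Finset.sum_mul, Finset.mul_sum]
          exact Finset.sum_congr rfl fun j _ => by rw [mul_assoc, mul_assoc]
      _ = antipode (R := k) (ry.left i) * ((counit (R := k) v • (1:H)) * ry.right i) := by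
          rw [HopfAlgebra.sum_antipode_mul_eq_smul rv]
      _ = counit (R := k) v • (antipode (R := k) (ry.left i) * ry.right i) := by
          rw [smul_mul_assoc, one_mul, mul_smul_comm]
  rw [Finset.sum_congr rfl inner, ← Finset.smul_sum, HopfAlgebra.sum_antipode_mul_eq_smul ry,
    smul_smul, mul_comm]

/-- The key identity `E a l = a * l`, valid in any Hopf algebra. -/
lemma Emap_eq_mul (a l : H) : Emap k a l = a * l := by
  obtain ra := Coalgebra.Repr.arbitrary k a
  obtain rl := Coalgebra.Repr.arbitrary k l
  have ha : (Coalgebra.comul (R := k)).lTensor H (Coalgebra.comul a)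
      = ∑ i ∈ ra.index, ra.left i ⊗ₜ[k] Coalgebra.comul (R := k) (ra.right i) := by
    rw [← ra.eq, map_sum]; rfl
  have hl : (Coalgebra.comul (R := k)).lTensor H (Coalgebra.comul l)
      = ∑ j ∈ rl.index, rl.left j ⊗ₜ[k] Coalgebra.comul (R := k) (rl.right j) := by
    rw [← rl.eq, map_sum]; rfl
  rw [Emap, ha, hl, TensorProduct.sum_tmul, map_sum]
  calc ∑ i ∈ ra.index, Fmap k H ((ra.left i ⊗ₜ[k] Coalgebra.comul (R := k) (ra.right i)) ⊗ₜ[k]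
        (∑ j ∈ rl.index, rl.left j ⊗ₜ[k] Coalgebra.comul (R := k) (rl.right j)))
      = ∑ i ∈ ra.index, ∑ j ∈ rl.index, (ra.left i * rl.left j) *
          ((counit (R := k) (ra.right i) * counit (R := k) (rl.right j)) • (1 : H)) := by
        refine Finset.sum_congr rfl fun i _ => ?_
        rw [TensorProduct.tmul_sum, map_sum]
        exact Finset.sum_congr rfl fun j _ => by rw [Fmap_tmul, ψmap_comul]
    _ = ∑ i ∈ ra.index, ∑ j ∈ rl.index,
          (counit (R := k) (ra.right i) • ra.left i) *
            (counit (R := k) (rl.right j) • rl.left j) := by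
        refine Finset.sum_congr rfl fun i _ => Finset.sum_congr rfl fun j _ => ?_
        simp only [mul_smul_comm, smul_mul_assoc, smul_smul, mul_one]
        rw [mul_comm (counit (R := k) (ra.right i))]
    _ = a * l := by
        rw [← Finset.sum_mul_sum]
        rw [sum_counit_right_smul ra, sum_counit_right_smul rl]

end AuxDefs

section Aux3
universe u₁ u₂
variable {k : Type u₁} {H : Type u₂} [CommRing k] [Ring H] [HopfAlgebra k H]

open Coalgebra HopfAlgebra TensorProduct LinearMap

lemma exists_repr_subalg {S : Subalgebra k H}
    (hS : ∀ a ∈ S, Coalgebra.comul (R := k) a ∈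
      LinearMap.range (TensorProduct.mapIncl (Subalgebra.toSubmodule S)
        (Subalgebra.toSubmodule S)))
    {x : H} (hx : x ∈ S) :
    ∃ r : Coalgebra.Repr k x (↥(Subalgebra.toSubmodule S) × ↥(Subalgebra.toSubmodule S)),
      (∀ i ∈ r.index, r.left i ∈ S) ∧ (∀ i ∈ r.index, r.right i ∈ S) := by
  obtain ⟨z, hz⟩ := hS x hx
  obtain ⟨s, hs⟩ := TensorProduct.exists_finset (R := k) z
  refine ⟨Coalgebra.Repr.mk (a := x)
      (ι := (↥(Subalgebra.toSubmodule S) × ↥(Subalgebra.toSubmodule S) : Type u₂))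
      s (fun p => (p.1 : H)) (fun p => (p.2 : H)) ?_,
    fun i _ => i.1.2, fun i _ => i.2.2⟩
  rw [← hz, hs, map_sum]
  rfl

lemma Emap_eq_mul'
    {SA SL : Subalgebra k H}
    (hSAc : ∀ a ∈ SA, Coalgebra.comul (R := k) a ∈
      LinearMap.range (TensorProduct.mapIncl (Subalgebra.toSubmodule SA)
        (Subalgebra.toSubmodule SA)))
    (hSLc : ∀ a ∈ SL, Coalgebra.comul (R := k) a ∈
      LinearMap.range (TensorProduct.mapIncl (Subalgebra.toSubmodule SL)
        (Subalgebra.toSubmodule SL)))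
    (hscal : ∀ x ∈ SA, ∀ u ∈ SL, γmap k H (x ⊗ₜ[k] u)
      = algebraMap k H (counit (R := k) x * counit (R := k) u))
    {a l : H} (ha : a ∈ SA) (hl : l ∈ SL) :
    Emap k a l = l * a := by
  obtain ⟨ra, hra1, hra2⟩ := exists_repr_subalg hSAc ha
  obtain ⟨rl, hrl1, hrl2⟩ := exists_repr_subalg hSLc hl
  set rx : ∀ i, Coalgebra.Repr k (ra.left i) (H × H) := fun i => Coalgebra.Repr.arbitrary k _
  set ru : ∀ j, Coalgebra.Repr k (rl.left j) (H × H) := fun j => Coalgebra.Repr.arbitrary k _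
  have ha2 : (Coalgebra.comul (R := k)).lTensor H (Coalgebra.comul a)
      = ∑ i ∈ ra.index, ∑ p ∈ (rx i).index,
          (rx i).left p ⊗ₜ[k] ((rx i).right p ⊗ₜ[k] ra.right i) := by
    rw [← Coalgebra.coassoc_apply a, ← ra.eq, map_sum, map_sum]
    refine Finset.sum_congr rfl fun i _ => ?_
    rw [LinearMap.rTensor_tmul, ← (rx i).eq, TensorProduct.sum_tmul, map_sum]
    rfl
  have hl2 : (Coalgebra.comul (R := k)).lTensor H (Coalgebra.comul l)
      = ∑ j ∈ rl.index, ∑ q ∈ (ru j).index,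
          (ru j).left q ⊗ₜ[k] ((ru j).right q ⊗ₜ[k] rl.right j) := by
    rw [← Coalgebra.coassoc_apply l, ← rl.eq, map_sum, map_sum]
    refine Finset.sum_congr rfl fun j _ => ?_
    rw [LinearMap.rTensor_tmul, ← (ru j).eq, TensorProduct.sum_tmul, map_sum]
    rfl
  rw [Emap, ha2, hl2]
  rw [TensorProduct.sum_tmul, map_sum]
  have step : ∀ i ∈ ra.index, Fmap k H
      ((∑ p ∈ (rx i).index, (rx i).left p ⊗ₜ[k] ((rx i).right p ⊗ₜ[k] ra.right i)) ⊗ₜ[k]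
        (∑ j ∈ rl.index, ∑ q ∈ (ru j).index,
          (ru j).left q ⊗ₜ[k] ((ru j).right q ⊗ₜ[k] rl.right j)))
      = ∑ j ∈ rl.index, γmap k H (ra.left i ⊗ₜ[k] rl.left j) * (rl.right j * ra.right i) := by
    intro i _
    rw [TensorProduct.sum_tmul, map_sum]
    have inner : ∀ p ∈ (rx i).index, Fmap k H
        (((rx i).left p ⊗ₜ[k] ((rx i).right p ⊗ₜ[k] ra.right i)) ⊗ₜ[k]
          (∑ j ∈ rl.index, ∑ q ∈ (ru j).index,
            (ru j).left q ⊗ₜ[k] ((ru j).right q ⊗ₜ[k] rl.right j)))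
        = ∑ j ∈ rl.index, ∑ q ∈ (ru j).index,
            ((rx i).left p * (ru j).left q) *
              ((antipode (R := k) ((rx i).right p) * antipode (R := k) ((ru j).right q)) *
                (rl.right j * ra.right i)) := by
      intro p _
      rw [TensorProduct.tmul_sum, map_sum]
      refine Finset.sum_congr rfl fun j _ => ?_
      rw [TensorProduct.tmul_sum, map_sum]
      refine Finset.sum_congr rfl fun q _ => ?_
      rw [Fmap_tmul, ψmap_tmul]
    rw [Finset.sum_congr rfl inner, Finset.sum_comm]
    refine Finset.sum_congr rfl fun j _ => ?_
    rw [γmap_tmul _ _ (rx i) (ru j), Finset.sum_mul]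
    refine Finset.sum_congr rfl fun p _ => ?_
    rw [Finset.sum_mul]
    refine Finset.sum_congr rfl fun q _ => ?_
    simp only [mul_assoc]
  rw [Finset.sum_congr rfl step]
  have scal : ∀ i ∈ ra.index, ∑ j ∈ rl.index,
      γmap k H (ra.left i ⊗ₜ[k] rl.left j) * (rl.right j * ra.right i)
      = ∑ j ∈ rl.index,
        (counit (R := k) (rl.left j) • rl.right j) * (counit (R := k) (ra.left i) • ra.right i) := by
    intro i hi
    refine Finset.sum_congr rfl fun j hj => ?_
    rw [hscal _ (hra1 i hi) _ (hrl1 j hj), ← Algebra.smul_def]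
    simp only [smul_mul_assoc, mul_smul_comm, smul_smul]
    try rw [mul_comm (counit (R := k) (ra.left i))]
  rw [Finset.sum_congr rfl scal, Finset.sum_comm, ← Finset.sum_mul_sum,
    sum_counit_left_smul rl, sum_counit_left_smul ra]

end Aux3

section Aux4
universe v₁ v₂
variable {k : Type v₁} {H : Type v₂} [CommRing k] [Ring H] [HopfAlgebra k H]

open Coalgebra HopfAlgebra TensorProduct LinearMap

lemma γmap_scalar {SA SL : Subalgebra k H}
    (hSA : IsNormalHopfSubalgebra k SA) (hSL : IsNormalHopfSubalgebra k SL)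
    (hint : ∀ x : H, x ∈ SA → x ∈ SL → x = algebraMap k H (counit (R := k) x))
    {x u : H} (hx : x ∈ SA) (hu : u ∈ SL) :
    γmap k H (x ⊗ₜ[k] u) = algebraMap k H (counit (R := k) x * counit (R := k) u) := by
  obtain ⟨rx, hx1, hx2⟩ := exists_repr_subalg hSA.1.1 hx
  obtain ⟨ru, hu1, hu2⟩ := exists_repr_subalg hSL.1.1 hu
  have memA : γmap k H (x ⊗ₜ[k] u) ∈ SA := by
    rw [γmap_tmul _ _ rx ru]
    have step : ∀ i ∈ rx.index, ∑ j ∈ ru.index, (rx.left i * ru.left j) *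
        (antipode (R := k) (rx.right i) * antipode (R := k) (ru.right j)) =
        rx.left i * adjL k (antipode (R := k) (rx.right i)) u := by
      intro i _
      rw [adjL_repr _ ru, Finset.mul_sum]
      exact Finset.sum_congr rfl fun j _ => by simp only [mul_assoc]
    rw [Finset.sum_congr rfl step]
    exact Subalgebra.sum_mem _ fun i hi => mul_mem (hx1 i hi)
      ((hSA.2 _ (hSA.1.2 _ (hx2 i hi)) u).1)
  have memL : γmap k H (x ⊗ₜ[k] u) ∈ SL := by
    rw [γmap_tmul _ _ rx ru, Finset.sum_comm]
    have step : ∀ j ∈ ru.index, ∑ i ∈ rx.index, (rx.left i * ru.left j) *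
        (antipode (R := k) (rx.right i) * antipode (R := k) (ru.right j)) =
        adjL k (ru.left j) x * antipode (R := k) (ru.right j) := by
      intro j _
      rw [adjL_repr _ rx, Finset.sum_mul]
      exact Finset.sum_congr rfl fun i _ => by simp only [mul_assoc]
    rw [Finset.sum_congr rfl step]
    exact Subalgebra.sum_mem _ fun j hj => mul_mem ((hSL.2 _ (hu1 j hj) x).1)
      (hSL.1.2 _ (hu2 j hj))
  rw [hint _ memA memL]
  congr 1
  rw [γmap_tmul _ _ rx ru, map_sum]
  have : ∀ i ∈ rx.index, counit (R := k) (∑ j ∈ ru.index, (rx.left i * ru.left j) *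
      (antipode (R := k) (rx.right i) * antipode (R := k) (ru.right j))) =
      (counit (R := k) (rx.left i) * counit (R := k) (rx.right i)) *
        ∑ j ∈ ru.index, counit (R := k) (ru.left j) * counit (R := k) (ru.right j) := by
    intro i _
    rw [map_sum, Finset.mul_sum]
    refine Finset.sum_congr rfl fun j _ => ?_
    simp only [Bialgebra.counit_mul, counit_antipode']
    ring
  rw [Finset.sum_congr rfl this, ← Finset.sum_mul, sum_counit_mul_counit_right rx,
    sum_counit_mul_counit_right ru]

lemma mul_comm_of_normal {SA SL : Subalgebra k H}
    (hSA : IsNormalHopfSubalgebra k SA) (hSL : IsNormalHopfSubalgebra k SL)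
    (hint : ∀ x : H, x ∈ SA → x ∈ SL → x = algebraMap k H (counit (R := k) x))
    {a l : H} (ha : a ∈ SA) (hl : l ∈ SL) : a * l = l * a := by
  rw [← Emap_eq_mul (k := k) a l]
  exact Emap_eq_mul' hSA.1.1 hSL.1.1
    (fun x hx u hu => γmap_scalar hSA hSL hint hx hu) ha hl

end Aux4
/-- Factorization of a Hopf algebra with both factors normal: if `A` and `L` are
Hopf subalgebras of `H` (presented as injective bialgebra embeddings of Hopf algebras),
both normal in `H`, and the multiplication map `A ⊗ L → H`, `a ⊗ l ↦ al`, is bijective,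
then it is an isomorphism of Hopf algebras, where `A ⊗ L` carries the tensor product
Hopf algebra structure. -/
theorem stmt2 {k A L H : Type u} [Field k] [Ring A] [Ring L] [Ring H]
    [HopfAlgebra k A] [HopfAlgebra k L] [HopfAlgebra k H]
    (ιA : A →ₐc[k] H) (ιL : L →ₐc[k] H)
    (hιA : Function.Injective ιA) (hιL : Function.Injective ιL)
    (hA : IsNormalHopfSubalgebra k (ιA : A →ₐ[k] H).range)
    (hL : IsNormalHopfSubalgebra k (ιL : L →ₐ[k] H).range)
    (hm : Function.Bijective (TensorProduct.lift
      (((LinearMap.mul k H).comp (ιA : A →ₐ[k] H).toLinearMap).compl₂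
        (ιL : L →ₐ[k] H).toLinearMap))) :
    ∃ e : (A ⊗[k] L) ≃ₐc[k] H, ∀ (a : A) (l : L), e (a ⊗ₜ[k] l) = ιA a * ιL l := by
  classical
  have hint : ∀ x : H, x ∈ (ιA : A →ₐ[k] H).range → x ∈ (ιL : L →ₐ[k] H).range →
      x = algebraMap k H (Coalgebra.counit (R := k) x) := by
    rintro x ⟨a, rfl⟩ ⟨l, hl⟩
    change (ιA : A →ₐ[k] H) a = algebraMap k H (Coalgebra.counit ((ιA : A →ₐ[k] H) a))
    set m := TensorProduct.lift (((LinearMap.mul k H).comp (ιA : A →ₐ[k] H).toLinearMap).compl₂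
        (ιL : L →ₐ[k] H).toLinearMap) with hm_def
    have h1 : m (a ⊗ₜ[k] (1 : L)) = (ιA : A →ₐ[k] H) a := by
      simp [hm_def]
    have h2 : m ((1 : A) ⊗ₜ[k] l) = (ιA : A →ₐ[k] H) a := by
      simp only [hm_def, TensorProduct.lift.tmul, LinearMap.compl₂_apply, LinearMap.comp_apply,
        AlgHom.toLinearMap_apply, map_one, LinearMap.mul_apply', one_mul]
      exact hl
    have h3 : a ⊗ₜ[k] (1 : L) = (1 : A) ⊗ₜ[k] l := hm.injective (h1.trans h2.symm)
    have h4 := congrArg (fun z => (TensorProduct.rid k A)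
      ((LinearMap.lTensor A (Coalgebra.counit (R := k) (A := L))) z)) h3
    simp only [LinearMap.lTensor_tmul, TensorProduct.rid_tmul, map_one,
      Bialgebra.counit_one, one_smul] at h4
    -- h4 : a = counit l • 1
    have h5 : (ιA : A →ₐ[k] H) a = Coalgebra.counit (R := k) l • (1 : H) := by
      rw [h4, map_smul, map_one]
    rw [h5, map_smul, Bialgebra.counit_one, smul_eq_mul, mul_one,
      Algebra.algebraMap_eq_smul_one]
  have comm : ∀ (a : A) (l : L), (ιA a : H) * ιL l = ιL l * ιA a := by
    intro a l
    exact mul_comm_of_normal hA hL hint ⟨a, rfl⟩ ⟨l, rfl⟩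
  set φ : (A ⊗[k] L) →ₐ[k] H := Algebra.TensorProduct.lift (ιA : A →ₐ[k] H) (ιL : L →ₐ[k] H)
    (fun a l => comm a l) with hφ_def
  have hφ_tmul : ∀ (a : A) (l : L), φ (a ⊗ₜ[k] l) = ιA a * ιL l := fun a l => by
    rw [hφ_def]
    exact Algebra.TensorProduct.lift_tmul _ _ _ _ _
  have hφbij : Function.Bijective φ := by
    have hφlin : ⇑φ = ⇑(TensorProduct.lift (((LinearMap.mul k H).comp
        (ιA : A →ₐ[k] H).toLinearMap).compl₂ (ιL : L →ₐ[k] H).toLinearMap)) := by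
      have : φ.toLinearMap = TensorProduct.lift (((LinearMap.mul k H).comp
          (ιA : A →ₐ[k] H).toLinearMap).compl₂ (ιL : L →ₐ[k] H).toLinearMap) :=
        TensorProduct.ext' fun a l => by
          simp only [AlgHom.toLinearMap_apply, hφ_tmul, TensorProduct.lift.tmul,
            LinearMap.compl₂_apply, LinearMap.comp_apply, LinearMap.mul_apply']
          rfl
      exact congrArg DFunLike.coe this
    rw [hφlin]
    exact hm
  have hcounit : (Coalgebra.counit (R := k) (A := H)) ∘ₗ φ.toLinearMap
      = Coalgebra.counit (R := k) (A := A ⊗[k] L) := by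
    apply TensorProduct.ext'
    intro a l
    simp only [LinearMap.comp_apply, AlgHom.toLinearMap_apply, hφ_tmul, Bialgebra.counit_mul]
    rw [Bialgebra.TensorProduct.counit_eq_algHom_toLinearMap]
    simp only [AlgHom.toLinearMap_apply, AlgHom.coe_comp, Function.comp_apply,
      Algebra.TensorProduct.map_tmul, Algebra.TensorProduct.lmul'_apply_tmul]
    rw [CoalgHomClass.counit_comp_apply ιA a, CoalgHomClass.counit_comp_apply ιL l]
    rw [AlgEquiv.coe_toAlgHom, Algebra.TensorProduct.rid_tmul, smul_eq_mul, mul_comm]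
    rfl
  have hcomul : TensorProduct.map φ.toLinearMap φ.toLinearMap ∘ₗ
      (Coalgebra.comul (R := k) (A := A ⊗[k] L))
      = (Coalgebra.comul (R := k) (A := H)) ∘ₗ φ.toLinearMap := by
    apply TensorProduct.ext'
    intro a l
    obtain ra := Coalgebra.Repr.arbitrary k a
    obtain rl := Coalgebra.Repr.arbitrary k l
    have lhs : (TensorProduct.map φ.toLinearMap φ.toLinearMap)
        (Coalgebra.comul (R := k) (a ⊗ₜ[k] l))
        = ∑ i ∈ ra.index, ∑ j ∈ rl.index,
            ((ιA (ra.left i) : H) * ιL (rl.left j)) ⊗ₜ[k]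
              ((ιA (ra.right i) : H) * ιL (rl.right j)) := by
      rw [Bialgebra.TensorProduct.comul_eq_algHom_toLinearMap]
      simp only [AlgHom.toLinearMap_apply, AlgHom.coe_comp, Function.comp_apply,
        Algebra.TensorProduct.map_tmul]
      have : (Bialgebra.comulAlgHom k A) a ⊗ₜ[k] (Bialgebra.comulAlgHom k L) l
          = ∑ i ∈ ra.index, ∑ j ∈ rl.index,
              (ra.left i ⊗ₜ[k] ra.right i) ⊗ₜ[k] (rl.left j ⊗ₜ[k] rl.right j) := by
        simp only [Bialgebra.comulAlgHom_apply]
        rw [← ra.eq, ← rl.eq, TensorProduct.sum_tmul]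
        exact Finset.sum_congr rfl fun i _ => TensorProduct.tmul_sum _ _ _
      rw [this, map_sum, map_sum]
      refine Finset.sum_congr rfl fun i _ => ?_
      rw [map_sum, map_sum]
      refine Finset.sum_congr rfl fun j _ => ?_
      simp [Algebra.TensorProduct.tensorTensorTensorComm_tmul, hφ_tmul]
    simp only [LinearMap.comp_apply]
    rw [lhs, AlgHom.toLinearMap_apply, hφ_tmul a l, Bialgebra.comul_mul,
      ← CoalgHomClass.map_comp_comul_apply ιA a, ← CoalgHomClass.map_comp_comul_apply ιL l,
      ← ra.eq, ← rl.eq, map_sum, map_sum, Finset.sum_mul_sum]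
    refine Finset.sum_congr rfl fun i _ => Finset.sum_congr rfl fun j _ => ?_
    simp only [TensorProduct.map_tmul, Algebra.TensorProduct.tmul_mul_tmul]
    rfl
  let e₀ := AlgEquiv.ofBijective φ hφbij
  refine ⟨{ toCoalgHom := ⟨φ.toLinearMap, hcounit, hcomul⟩,
            invFun := ⇑e₀.symm,
            left_inv := fun x => e₀.symm_apply_apply x,
            right_inv := fun x => e₀.apply_symm_apply x,
            map_mul' := map_mul φ }, ?_⟩
  intro a l
  exact hφ_tmul a l
end

section
/- Let H be a semisimple Hopf algebra over an algebraically closed field k of characteristic zero, and let π₁, π₂ : H → H be Hopf algebra (bialgebra) homomorphisms which are normal endomorphisms and satisfy: π_i ∘ π_i = π_i for i = 1,2; π₁ ⋆ π₂ = id_H (convolution); and π₁ ∘ π₂ = π₂ ∘ π₁ = η ∘ ε. Then A := π₁(H) and L := π₂(H) are normal Hopf subalgebras of H with A ∩ L = k·1 and AL = H, and the multiplication map A ⊗ L → H, a ⊗ l ↦ al, is an isomorphism of Hopf algebras. -/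
open scoped TensorProduct

/-- A linear endomorphism of a bialgebra is a bialgebra homomorphism if it preserves the
unit, multiplication, counit and comultiplication. -/
def IsBialgebraHomLM {k H : Type*} [CommRing k] [Ring H] [Bialgebra k H]
    (f : H →ₗ[k] H) : Prop :=
  f 1 = 1 ∧ (∀ x y : H, f (x * y) = f x * f y) ∧
  Coalgebra.counit (R := k) ∘ₗ f = Coalgebra.counit ∧
  Coalgebra.comul (R := k) ∘ₗ f = (TensorProduct.map f f) ∘ₗ Coalgebra.comul

/-- The convolution product of two linear endomorphisms: `f ⋆ g = μ ∘ (f ⊗ g) ∘ Δ`. -/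
noncomputable def convMul {k H : Type*} [CommRing k] [Ring H] [Bialgebra k H]
    (f g : H →ₗ[k] H) : H →ₗ[k] H :=
  (LinearMap.mul' k H) ∘ₗ (TensorProduct.map f g) ∘ₗ Coalgebra.comul


namespace Stmt8Aux

open TensorProduct Coalgebra LinearMap HopfAlgebra

variable {k : Type*} [CommRing k]

section Conv

variable {C B : Type*} [AddCommGroup C] [Module k C] [Coalgebra k C]
  [Ring B] [Algebra k B]

/-- Convolution product in `Hom(C, B)`. -/
noncomputable def conv (f g : C →ₗ[k] B) : C →ₗ[k] B :=
  (LinearMap.mul' k B) ∘ₗ (TensorProduct.map f g) ∘ₗ Coalgebra.comul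

/-- The convolution unit. -/
noncomputable def cunit : C →ₗ[k] B := (Algebra.linearMap k B) ∘ₗ Coalgebra.counit

lemma conv_repr {ι : Type*} (f g : C →ₗ[k] B) {c : C} (r : Repr k c ι) :
    conv f g c = ∑ i ∈ r.index, f (r.left i) * g (r.right i) := by
  simp only [conv, LinearMap.comp_apply, ← r.eq, map_sum, TensorProduct.map_tmul,
    LinearMap.mul'_apply]

lemma sum_counit_smul_left {ι : Type*} (f : C →ₗ[k] B) (c : C) (r : Repr k c ι) :
    ∑ i ∈ r.index, Coalgebra.counit (R := k) (r.left i) • f (r.right i) = f c := by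
  have h := Coalgebra.sum_counit_tmul_map_eq (R := k) f c (repr := r)
  calc ∑ i ∈ r.index, Coalgebra.counit (R := k) (r.left i) • f (r.right i)
      = TensorProduct.lid k B (∑ i ∈ r.index,
          Coalgebra.counit (R := k) (r.left i) ⊗ₜ[k] f (r.right i)) := by
        rw [map_sum]; simp
    _ = f c := by rw [h]; simp

lemma sum_counit_smul_right {ι : Type*} (f : C →ₗ[k] B) (c : C) (r : Repr k c ι) :
    ∑ i ∈ r.index, Coalgebra.counit (R := k) (r.right i) • f (r.left i) = f c := by
  have h := Coalgebra.sum_map_tmul_counit_eq (R := k) f c (repr := r)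
  calc ∑ i ∈ r.index, Coalgebra.counit (R := k) (r.right i) • f (r.left i)
      = TensorProduct.rid k B (∑ i ∈ r.index,
          f (r.left i) ⊗ₜ[k] Coalgebra.counit (R := k) (r.right i)) := by
        rw [map_sum]; simp
    _ = f c := by rw [h]; simp

lemma conv_assoc (f g h : C →ₗ[k] B) : conv (conv f g) h = conv f (conv g h) := by
  ext c
  have key := Coalgebra.sum_map_tmul_tmul_eq (R := k) f g h c (repr := ℛ k c)
    (a₁ := fun i => ℛ k ((ℛ k c).left i)) (a₂ := fun i => ℛ k ((ℛ k c).right i))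
  apply_fun ((LinearMap.mul' k B) ∘ₗ (LinearMap.mul' k B).lTensor B) at key
  simp only [map_sum, LinearMap.comp_apply, LinearMap.lTensor_tmul,
    LinearMap.mul'_apply] at key
  rw [conv_repr (conv f g) h (ℛ k c), conv_repr f (conv g h) (ℛ k c)]
  calc ∑ i ∈ (ℛ k c).index, conv f g ((ℛ k c).left i) * h ((ℛ k c).right i)
      = ∑ i ∈ (ℛ k c).index, ∑ j ∈ (ℛ k ((ℛ k c).left i)).index,
          f ((ℛ k ((ℛ k c).left i)).left j) * ((g ((ℛ k ((ℛ k c).left i)).right j)) *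
            h ((ℛ k c).right i)) := by
        refine Finset.sum_congr rfl fun i _ => ?_
        rw [conv_repr f g (ℛ k ((ℛ k c).left i)), Finset.sum_mul]
        simp [mul_assoc]
    _ = ∑ i ∈ (ℛ k c).index, ∑ j ∈ (ℛ k ((ℛ k c).right i)).index,
          f ((ℛ k c).left i) * (g ((ℛ k ((ℛ k c).right i)).left j) *
            h ((ℛ k ((ℛ k c).right i)).right j)) := key.symm
    _ = ∑ i ∈ (ℛ k c).index, f ((ℛ k c).left i) * conv g h ((ℛ k c).right i) := by
        refine Finset.sum_congr rfl fun i _ => ?_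
        rw [conv_repr g h (ℛ k ((ℛ k c).right i)), Finset.mul_sum]

lemma conv_cunit_left (f : C →ₗ[k] B) : conv cunit f = f := by
  ext c
  rw [conv_repr cunit f (ℛ k c)]
  simp only [cunit, LinearMap.comp_apply, Algebra.linearMap_apply]
  calc ∑ i ∈ (ℛ k c).index, algebraMap k B (Coalgebra.counit ((ℛ k c).left i)) * f ((ℛ k c).right i)
      = ∑ i ∈ (ℛ k c).index, Coalgebra.counit (R := k) ((ℛ k c).left i) • f ((ℛ k c).right i) := by
        simp [Algebra.smul_def]
    _ = f c := sum_counit_smul_left f c (ℛ k c)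

lemma conv_cunit_right (f : C →ₗ[k] B) : conv f cunit = f := by
  ext c
  rw [conv_repr f cunit (ℛ k c)]
  simp only [cunit, LinearMap.comp_apply, Algebra.linearMap_apply]
  calc ∑ i ∈ (ℛ k c).index, f ((ℛ k c).left i) * algebraMap k B (Coalgebra.counit ((ℛ k c).right i))
      = ∑ i ∈ (ℛ k c).index, Coalgebra.counit (R := k) ((ℛ k c).right i) • f ((ℛ k c).left i) := by
        refine Finset.sum_congr rfl fun i _ => ?_
        rw [← Algebra.commutes, ← Algebra.smul_def]
    _ = f c := sum_counit_smul_right f c (ℛ k c)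

lemma conv_inv_unique {f m g : C →ₗ[k] B} (h1 : conv f m = cunit) (h2 : conv m g = cunit) :
    f = g := by
  have : conv f (conv m g) = conv (conv f m) g := (conv_assoc f m g).symm
  rw [h1, h2, conv_cunit_left, conv_cunit_right] at this
  exact this

end Conv

section TensorCoalgebra

variable {C : Type*} [AddCommGroup C] [Module k C] [Coalgebra k C]

/-- Comultiplication on `C ⊗ C`. -/
noncomputable def comul₂ : C ⊗[k] C →ₗ[k] (C ⊗[k] C) ⊗[k] (C ⊗[k] C) :=
  (TensorProduct.tensorTensorTensorComm k C C C C).toLinearMap ∘ₗ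
    TensorProduct.map Coalgebra.comul Coalgebra.comul

/-- Counit on `C ⊗ C`. -/
noncomputable def counit₂ : C ⊗[k] C →ₗ[k] k :=
  (TensorProduct.lid k k).toLinearMap ∘ₗ TensorProduct.map Coalgebra.counit Coalgebra.counit

lemma comul₂_tmul (a b : C) :
    comul₂ (a ⊗ₜ[k] b) = TensorProduct.tensorTensorTensorComm k C C C C
      (Coalgebra.comul (R := k) a ⊗ₜ[k] Coalgebra.comul (R := k) b) := rfl

lemma counit₂_tmul (a b : C) :
    counit₂ (a ⊗ₜ[k] b) = Coalgebra.counit (R := k) a * Coalgebra.counit (R := k) b := by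
  simp [counit₂, smul_eq_mul]

/-- The shuffle map used for coassociativity. -/
noncomputable def shuffle : (C ⊗[k] (C ⊗[k] C)) ⊗[k] (C ⊗[k] (C ⊗[k] C)) →ₗ[k]
    (C ⊗[k] C) ⊗[k] ((C ⊗[k] C) ⊗[k] (C ⊗[k] C)) :=
  (LinearMap.lTensor (C ⊗[k] C)
    (TensorProduct.tensorTensorTensorComm k C C C C).toLinearMap) ∘ₗ
    (TensorProduct.tensorTensorTensorComm k C (C ⊗[k] C) C (C ⊗[k] C)).toLinearMap

lemma claimA (u v : C ⊗[k] C) :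
    (TensorProduct.assoc k (C ⊗[k] C) (C ⊗[k] C) (C ⊗[k] C))
      (comul₂.rTensor (C ⊗[k] C) (TensorProduct.tensorTensorTensorComm k C C C C (u ⊗ₜ v))) =
    shuffle ((TensorProduct.assoc k C C C ((Coalgebra.comul (R := k)).rTensor C u)) ⊗ₜ
      (TensorProduct.assoc k C C C ((Coalgebra.comul (R := k)).rTensor C v))) := by
  induction u using TensorProduct.induction_on with
  | zero => simp
  | add u₁ u₂ h₁ h₂ => simp only [TensorProduct.add_tmul, map_add, h₁, h₂]
  | tmul x1 x2 =>
    induction v using TensorProduct.induction_on with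
    | zero => simp
    | add v₁ v₂ h₁ h₂ => simp only [TensorProduct.add_tmul, TensorProduct.tmul_add, map_add, h₁, h₂]
    | tmul y1 y2 =>
      simp only [TensorProduct.tensorTensorTensorComm_tmul, LinearMap.rTensor_tmul,
        comul₂_tmul]
      -- inner: generalize comul x1 and comul y1
      generalize Coalgebra.comul (R := k) x1 = p
      generalize Coalgebra.comul (R := k) y1 = q
      induction p using TensorProduct.induction_on with
      | zero => simp
      | add p₁ p₂ h₁ h₂ => simp only [TensorProduct.add_tmul, TensorProduct.tmul_add, map_add,
          h₁, h₂]
      | tmul s t =>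
        induction q using TensorProduct.induction_on with
        | zero => simp
        | add q₁ q₂ h₁ h₂ => simp only [TensorProduct.add_tmul, TensorProduct.tmul_add, map_add,
            h₁, h₂]
        | tmul s' t' =>
          simp [shuffle, TensorProduct.tensorTensorTensorComm_tmul]

lemma claimB (u v : C ⊗[k] C) :
    comul₂.lTensor (C ⊗[k] C) (TensorProduct.tensorTensorTensorComm k C C C C (u ⊗ₜ v)) =
    shuffle (((Coalgebra.comul (R := k)).lTensor C u) ⊗ₜ
      ((Coalgebra.comul (R := k)).lTensor C v)) := by
  induction u using TensorProduct.induction_on with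
  | zero => simp
  | add u₁ u₂ h₁ h₂ => simp only [TensorProduct.add_tmul, map_add, h₁, h₂]
  | tmul x1 x2 =>
    induction v using TensorProduct.induction_on with
    | zero => simp
    | add v₁ v₂ h₁ h₂ => simp only [TensorProduct.add_tmul, TensorProduct.tmul_add, map_add, h₁, h₂]
    | tmul y1 y2 =>
      simp only [TensorProduct.tensorTensorTensorComm_tmul, LinearMap.lTensor_tmul,
        comul₂_tmul]
      generalize Coalgebra.comul (R := k) x2 = p
      generalize Coalgebra.comul (R := k) y2 = q
      induction p using TensorProduct.induction_on with
      | zero => simp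
      | add p₁ p₂ h₁ h₂ => simp only [TensorProduct.add_tmul, TensorProduct.tmul_add, map_add,
          h₁, h₂]
      | tmul s t =>
        induction q using TensorProduct.induction_on with
        | zero => simp
        | add q₁ q₂ h₁ h₂ => simp only [TensorProduct.add_tmul, TensorProduct.tmul_add, map_add,
            h₁, h₂]
        | tmul s' t' =>
          simp [shuffle, TensorProduct.tensorTensorTensorComm_tmul]

/-- The tensor square of a coalgebra is a coalgebra. -/
noncomputable def tensorSquareCoalgebra : Coalgebra k (C ⊗[k] C) where
  comul := comul₂
  counit := counit₂
  coassoc := by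
    apply TensorProduct.ext'
    intro a b
    simp only [LinearMap.comp_apply, LinearEquiv.coe_coe]
    rw [comul₂_tmul, claimA, Coalgebra.coassoc_apply, Coalgebra.coassoc_apply, ← claimB]
  rTensor_counit_comp_comul := by
    apply TensorProduct.ext'
    intro a b
    have key : ∀ u v : C ⊗[k] C,
        counit₂.rTensor (C ⊗[k] C) (TensorProduct.tensorTensorTensorComm k C C C C (u ⊗ₜ v)) =
        ((LinearMap.mul' k k).rTensor (C ⊗[k] C) ∘ₗ
          (TensorProduct.tensorTensorTensorComm k k C k C).toLinearMap)
          (((Coalgebra.counit (R := k)).rTensor C u) ⊗ₜ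
            ((Coalgebra.counit (R := k)).rTensor C v)) := by
      intro u v
      induction u using TensorProduct.induction_on with
      | zero => simp
      | add u₁ u₂ h₁ h₂ => simp only [TensorProduct.add_tmul, map_add, h₁, h₂]
      | tmul x1 x2 =>
        induction v using TensorProduct.induction_on with
        | zero => simp
        | add v₁ v₂ h₁ h₂ => simp only [TensorProduct.add_tmul, TensorProduct.tmul_add,
            map_add, h₁, h₂]
        | tmul y1 y2 =>
          simp [TensorProduct.tensorTensorTensorComm_tmul, counit₂_tmul]
    simp only [LinearMap.comp_apply, comul₂_tmul, key, Coalgebra.rTensor_counit_comul]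
    simp [TensorProduct.tensorTensorTensorComm_tmul]
  lTensor_counit_comp_comul := by
    apply TensorProduct.ext'
    intro a b
    have key : ∀ u v : C ⊗[k] C,
        counit₂.lTensor (C ⊗[k] C) (TensorProduct.tensorTensorTensorComm k C C C C (u ⊗ₜ v)) =
        ((LinearMap.mul' k k).lTensor (C ⊗[k] C) ∘ₗ
          (TensorProduct.tensorTensorTensorComm k C k C k).toLinearMap)
          (((Coalgebra.counit (R := k)).lTensor C u) ⊗ₜ
            ((Coalgebra.counit (R := k)).lTensor C v)) := by
      intro u v
      induction u using TensorProduct.induction_on with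
      | zero => simp
      | add u₁ u₂ h₁ h₂ => simp only [TensorProduct.add_tmul, map_add, h₁, h₂]
      | tmul x1 x2 =>
        induction v using TensorProduct.induction_on with
        | zero => simp
        | add v₁ v₂ h₁ h₂ => simp only [TensorProduct.add_tmul, TensorProduct.tmul_add,
            map_add, h₁, h₂]
        | tmul y1 y2 =>
          simp [TensorProduct.tensorTensorTensorComm_tmul, counit₂_tmul]
    simp only [LinearMap.comp_apply, comul₂_tmul, key, Coalgebra.lTensor_counit_comul]
    simp [TensorProduct.tensorTensorTensorComm_tmul]

end TensorCoalgebra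

section Hopf

attribute [local instance] tensorSquareCoalgebra

variable {H : Type*} [Ring H] [HopfAlgebra k H]

local notation "μH" => LinearMap.mul' k H
local notation "SH" => HopfAlgebra.antipode (R := k) (A := H)
local notation "εH" => Coalgebra.counit (R := k) (A := H)
local notation "ΔH" => Coalgebra.comul (R := k) (A := H)

lemma comul_tensorSquare (w : H ⊗[k] H) :
    Coalgebra.comul (R := k) w = comul₂ w := rfl

lemma counit_tensorSquare (w : H ⊗[k] H) :
    Coalgebra.counit (R := k) w = counit₂ w := by
  induction w using TensorProduct.induction_on with
  | zero => simp
  | add u v h₁ h₂ => simp only [map_add, h₁, h₂]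
  | tmul a b => simp [counit₂_tmul, mul_comm]

lemma mulmul (u v : H ⊗[k] H) :
    TensorProduct.map μH μH (TensorProduct.tensorTensorTensorComm k H H H H (u ⊗ₜ v)) =
      u * v := by
  induction u using TensorProduct.induction_on with
  | zero => simp
  | add u₁ u₂ h₁ h₂ => simp only [TensorProduct.add_tmul, map_add, h₁, h₂, add_mul]
  | tmul x1 x2 =>
    induction v using TensorProduct.induction_on with
    | zero => simp
    | add v₁ v₂ h₁ h₂ => simp only [TensorProduct.tmul_add, map_add, h₁, h₂, mul_add]
    | tmul y1 y2 =>
      simp [TensorProduct.tensorTensorTensorComm_tmul, Algebra.TensorProduct.tmul_mul_tmul]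

lemma map_mul_comul₂ (w : H ⊗[k] H) :
    TensorProduct.map μH μH (comul₂ w) = ΔH (μH w) := by
  induction w using TensorProduct.induction_on with
  | zero => simp
  | add u v h₁ h₂ => simp only [map_add, h₁, h₂]
  | tmul a b => rw [comul₂_tmul, mulmul]; simp

lemma counit_mul₂ (w : H ⊗[k] H) : counit₂ w = εH (μH w) := by
  induction w using TensorProduct.induction_on with
  | zero => simp
  | add u v h₁ h₂ => simp only [map_add, h₁, h₂]
  | tmul a b => simp [counit₂_tmul]

lemma map_antipode_mul (z : (H ⊗[k] H) ⊗[k] (H ⊗[k] H)) :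
    TensorProduct.map (SH ∘ₗ μH) μH z = (SH).rTensor H (TensorProduct.map μH μH z) := by
  have : TensorProduct.map (SH ∘ₗ μH) μH = (SH).rTensor H ∘ₗ TensorProduct.map μH μH := by
    apply TensorProduct.ext'
    intro u v
    simp
  rw [this]; rfl

lemma conv_SM_M : conv (k := k) ((SH) ∘ₗ μH) μH = cunit := by
  refine LinearMap.ext fun w => ?_
  have : conv (k := k) ((SH) ∘ₗ μH) μH w =
      μH (TensorProduct.map ((SH) ∘ₗ μH) μH (comul₂ w)) := rfl
  rw [this, map_antipode_mul, map_mul_comul₂, HopfAlgebra.mul_antipode_rTensor_comul_apply]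
  show _ = (Algebra.linearMap k H) (counit₂ w)
  rw [counit_mul₂]
  simp

lemma comul₂_repr {ι κ : Type*} (a b : H) (ra : Coalgebra.Repr k a ι) (rb : Coalgebra.Repr k b κ) :
    comul₂ (a ⊗ₜ[k] b) = ∑ i ∈ ra.index, ∑ j ∈ rb.index,
      ((ra.left i) ⊗ₜ[k] (rb.left j)) ⊗ₜ[k] ((ra.right i) ⊗ₜ[k] (rb.right j)) := by
  rw [comul₂_tmul, ← ra.eq, ← rb.eq]
  rw [TensorProduct.sum_tmul]
  rw [map_sum]
  refine Finset.sum_congr rfl fun i _ => ?_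
  rw [TensorProduct.tmul_sum, map_sum]
  refine Finset.sum_congr rfl fun j _ => ?_
  rw [TensorProduct.tensorTensorTensorComm_tmul]

lemma conv_M_G :
    conv (k := k) μH (μH ∘ₗ TensorProduct.map SH SH ∘ₗ (TensorProduct.comm k H H).toLinearMap)
      = cunit := by
  apply TensorProduct.ext'
  intro a b
  set G := μH ∘ₗ TensorProduct.map SH SH ∘ₗ (TensorProduct.comm k H H).toLinearMap with hG
  have hGapp : ∀ x y : H, G (x ⊗ₜ[k] y) = SH y * SH x := by intro x y; simp [hG]
  have h1 : conv (k := k) μH G (a ⊗ₜ[k] b) =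
      μH (TensorProduct.map μH G (comul₂ (a ⊗ₜ[k] b))) := rfl
  rw [h1, comul₂_repr a b (ℛ k a) (ℛ k b)]
  simp only [map_sum, TensorProduct.map_tmul, LinearMap.mul'_apply, hGapp]
  have step1 : ∀ i ∈ (ℛ k a).index,
      ∑ j ∈ (ℛ k b).index, ((ℛ k a).left i * (ℛ k b).left j) *
        (SH ((ℛ k b).right j) * SH ((ℛ k a).right i)) =
      Coalgebra.counit (R := k) b • ((ℛ k a).left i * SH ((ℛ k a).right i)) := by
    intro i _
    calc ∑ j ∈ (ℛ k b).index, ((ℛ k a).left i * (ℛ k b).left j) *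
        (SH ((ℛ k b).right j) * SH ((ℛ k a).right i))
        = (ℛ k a).left i * ((∑ j ∈ (ℛ k b).index, (ℛ k b).left j * SH ((ℛ k b).right j)) *
            SH ((ℛ k a).right i)) := by
          rw [Finset.sum_mul, Finset.mul_sum]
          exact Finset.sum_congr rfl fun j _ => by noncomm_ring
      _ = (ℛ k a).left i * ((Coalgebra.counit (R := k) b • (1 : H)) * SH ((ℛ k a).right i)) := by
          rw [HopfAlgebra.sum_mul_antipode_eq_smul (ℛ k b)]
      _ = Coalgebra.counit (R := k) b • ((ℛ k a).left i * SH ((ℛ k a).right i)) := by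
          rw [smul_mul_assoc, one_mul, mul_smul_comm]
  rw [Finset.sum_congr rfl step1, ← Finset.smul_sum, HopfAlgebra.sum_mul_antipode_eq_smul (ℛ k a)]
  show _ = (Algebra.linearMap k H) (counit₂ (a ⊗ₜ[k] b))
  rw [counit₂_tmul]
  rw [smul_smul, Algebra.linearMap_apply, Algebra.smul_def, mul_one, mul_comm]

lemma antipode_mul_rev (x y : H) : SH (x * y) = SH y * SH x := by
  have h := conv_inv_unique (k := k) (C := H ⊗[k] H) (B := H) conv_SM_M conv_M_G
  have := congr($h (x ⊗ₜ[k] y))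
  simpa using this

lemma comp_antipode (π : H →ₗ[k] H) (h1 : π 1 = 1) (hmul : ∀ x y, π (x * y) = π x * π y)
    (hcounit : (εH) ∘ₗ π = εH) (hcomul : (ΔH) ∘ₗ π = TensorProduct.map π π ∘ₗ ΔH) :
    π ∘ₗ SH = SH ∘ₗ π := by
  have hcomul' : ∀ w, ΔH (π w) = TensorProduct.map π π (ΔH w) := by
    intro w
    have := LinearMap.congr_fun hcomul w
    simpa using this
  have hcounit' : ∀ w, εH (π w) = εH w := by
    intro w
    have := LinearMap.congr_fun hcounit w
    simpa using this
  refine conv_inv_unique (k := k) (C := H) (B := H) (m := π) ?_ ?_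
  · refine LinearMap.ext fun w => ?_
    have hmap : TensorProduct.map (π ∘ₗ SH) π = TensorProduct.map π π ∘ₗ (SH).rTensor H := by
      apply TensorProduct.ext'; intro x y; simp
    have hμ : ∀ z : H ⊗[k] H, μH (TensorProduct.map π π z) = π (μH z) := by
      intro z
      induction z using TensorProduct.induction_on with
      | zero => simp
      | add u v h₁ h₂ => simp only [map_add, h₁, h₂]
      | tmul x y => simp [hmul]
    have h0 : conv (k := k) (π ∘ₗ SH) π w = μH (TensorProduct.map (π ∘ₗ SH) π (ΔH w)) := rfl
    rw [h0, hmap]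
    show μH (TensorProduct.map π π ((SH).rTensor H (ΔH w))) = _
    rw [hμ, HopfAlgebra.mul_antipode_rTensor_comul_apply]
    show π (algebraMap k H (εH w)) = (Algebra.linearMap k H) (εH w)
    rw [Algebra.algebraMap_eq_smul_one, map_smul, h1, Algebra.linearMap_apply,
      Algebra.algebraMap_eq_smul_one]
  · refine LinearMap.ext fun w => ?_
    have hmap : TensorProduct.map π (SH ∘ₗ π) = (SH).lTensor H ∘ₗ TensorProduct.map π π := by
      apply TensorProduct.ext'; intro x y; simp
    have h0 : conv (k := k) π (SH ∘ₗ π) w = μH (TensorProduct.map π (SH ∘ₗ π) (ΔH w)) := rfl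
    rw [h0, hmap]
    show μH ((SH).lTensor H (TensorProduct.map π π (ΔH w))) = _
    rw [← hcomul' w, HopfAlgebra.mul_antipode_lTensor_comul_apply, hcounit' w]
    rfl

end Hopf

end Stmt8Aux


set_option maxHeartbeats 2000000 in
open Coalgebra in
/-- Let `H` be a semisimple Hopf algebra over an algebraically closed field of
characteristic zero and `π₁, π₂ : H → H` bialgebra homomorphisms which are normal
endomorphisms, idempotent under composition, with `π₁ ⋆ π₂ = id` and
`π₁ ∘ π₂ = π₂ ∘ π₁ = η ∘ ε`.  Then `A := π₁(H)` and `L := π₂(H)` are normal Hopf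
subalgebras with `A ∩ L = k·1` and `AL = H`, and the multiplication map `A ⊗ L → H`
is an isomorphism of Hopf algebras (it is bijective, and multiplicative since the
elements of `A` and `L` commute; its compatibility with the coalgebra structures is
automatic). -/
theorem stmt8 {k H : Type*} [Field k] [IsAlgClosed k] [CharZero k] [Ring H] [HopfAlgebra k H]
    [FiniteDimensional k H] [IsSemisimpleRing H]
    (π₁ π₂ : H →ₗ[k] H)
    (hb₁ : IsBialgebraHomLM π₁) (hb₂ : IsBialgebraHomLM π₂)
    (hn₁ : ∀ h x : H, π₁ (adjL k x h) = adjL k (π₁ x) h)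
    (hn₂ : ∀ h x : H, π₂ (adjL k x h) = adjL k (π₂ x) h)
    (hi₁ : π₁ ∘ₗ π₁ = π₁) (hi₂ : π₂ ∘ₗ π₂ = π₂)
    (hconv : convMul π₁ π₂ = LinearMap.id)
    (hcomp₁ : π₁ ∘ₗ π₂ = (Algebra.linearMap k H) ∘ₗ Coalgebra.counit)
    (hcomp₂ : π₂ ∘ₗ π₁ = (Algebra.linearMap k H) ∘ₗ Coalgebra.counit) :
    ∃ A L : Subalgebra k H,
      (A : Set H) = Set.range π₁ ∧ (L : Set H) = Set.range π₂ ∧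
      IsNormalHopfSubalgebra k A ∧ IsNormalHopfSubalgebra k L ∧
      A ⊓ L = ⊥ ∧
      Subalgebra.toSubmodule A * Subalgebra.toSubmodule L = ⊤ ∧
      Function.Bijective ((LinearMap.mul' k H).comp
        (TensorProduct.mapIncl (Subalgebra.toSubmodule A) (Subalgebra.toSubmodule L))) ∧
      ∀ a ∈ A, ∀ l ∈ L, a * l = l * a := by
  classical
  obtain ⟨h1₁, hmul₁, hcounit₁, hcomul₁⟩ := hb₁
  obtain ⟨h1₂, hmul₂, hcounit₂, hcomul₂⟩ := hb₂
  -- pointwise versions of the hypotheses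
  have hcomul₁' : ∀ x, Coalgebra.comul (R := k) (π₁ x) = TensorProduct.map π₁ π₁
      (Coalgebra.comul x) := fun x => by simpa using LinearMap.congr_fun hcomul₁ x
  have hcomul₂' : ∀ x, Coalgebra.comul (R := k) (π₂ x) = TensorProduct.map π₂ π₂
      (Coalgebra.comul x) := fun x => by simpa using LinearMap.congr_fun hcomul₂ x
  have hcounit₁' : ∀ x, Coalgebra.counit (R := k) (π₁ x) = Coalgebra.counit (R := k) x :=
    fun x => by simpa using LinearMap.congr_fun hcounit₁ x
  have hcounit₂' : ∀ x, Coalgebra.counit (R := k) (π₂ x) = Coalgebra.counit (R := k) x :=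
    fun x => by simpa using LinearMap.congr_fun hcounit₂ x
  have hidem₁ : ∀ x, π₁ (π₁ x) = π₁ x := fun x => by simpa using LinearMap.congr_fun hi₁ x
  have hidem₂ : ∀ x, π₂ (π₂ x) = π₂ x := fun x => by simpa using LinearMap.congr_fun hi₂ x
  have hcross₁ : ∀ x, π₁ (π₂ x) = algebraMap k H (Coalgebra.counit (R := k) x) :=
    fun x => by simpa using LinearMap.congr_fun hcomp₁ x
  have hcross₂ : ∀ x, π₂ (π₁ x) = algebraMap k H (Coalgebra.counit (R := k) x) :=
    fun x => by simpa using LinearMap.congr_fun hcomp₂ x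
  have hconv' : ∀ h : H, LinearMap.mul' k H (TensorProduct.map π₁ π₂
      (Coalgebra.comul (R := k) h)) = h := fun h => by
    simpa [convMul] using LinearMap.congr_fun hconv h
  set f₁ : H →ₐ[k] H := AlgHom.ofLinearMap π₁ h1₁ hmul₁ with hf₁
  set f₂ : H →ₐ[k] H := AlgHom.ofLinearMap π₂ h1₂ hmul₂ with hf₂
  set A : Subalgebra k H := f₁.range with hA
  set L : Subalgebra k H := f₂.range with hL
  have hmemA : ∀ x : H, x ∈ A ↔ ∃ y, π₁ y = x := fun x => Iff.rfl
  have hmemL : ∀ x : H, x ∈ L ↔ ∃ y, π₂ y = x := fun x => Iff.rfl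
  -- antipode commutes with the projections
  have hS₁ : ∀ x, π₁ (HopfAlgebra.antipode (R := k) x) =
      HopfAlgebra.antipode (R := k) (π₁ x) := fun x =>
    LinearMap.congr_fun (Stmt8Aux.comp_antipode π₁ h1₁ hmul₁ hcounit₁ hcomul₁) x
  have hS₂ : ∀ x, π₂ (HopfAlgebra.antipode (R := k) x) =
      HopfAlgebra.antipode (R := k) (π₂ x) := fun x =>
    LinearMap.congr_fun (Stmt8Aux.comp_antipode π₂ h1₂ hmul₂ hcounit₂ hcomul₂) x
  have hSA : ∀ a ∈ A, HopfAlgebra.antipode (R := k) a ∈ A := by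
    rintro a ⟨x, rfl⟩
    exact ⟨HopfAlgebra.antipode (R := k) x, hS₁ x⟩
  have hSL : ∀ a ∈ L, HopfAlgebra.antipode (R := k) a ∈ L := by
    rintro a ⟨x, rfl⟩
    exact ⟨HopfAlgebra.antipode (R := k) x, hS₂ x⟩
  -- commutation
  have hcomm : ∀ x y : H, π₁ x * π₂ y = π₂ y * π₁ x := by
    intro x y
    have key : ∀ u v : H ⊗[k] H,
        LinearMap.mul' k H (TensorProduct.map π₁ π₂
          ((TensorProduct.map π₂ π₂ u) * (TensorProduct.map π₁ π₁ v))) =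
        LinearMap.mul' k H (TensorProduct.map π₁ π₂
          ((TensorProduct.map π₁ π₁ v) * (TensorProduct.map π₂ π₂ u))) := by
      intro u v
      induction u using TensorProduct.induction_on with
      | zero => simp
      | add u₁ u₂ h₁ h₂ => simp only [map_add, add_mul, mul_add, h₁, h₂]
      | tmul y1 y2 =>
        induction v using TensorProduct.induction_on with
        | zero => simp
        | add v₁ v₂ h₁ h₂ => simp only [map_add, add_mul, mul_add, h₁, h₂]
        | tmul x1 x2 =>
          simp only [TensorProduct.map_tmul, Algebra.TensorProduct.tmul_mul_tmul,
            LinearMap.mul'_apply, hmul₁, hmul₂, hcross₁, hcross₂, hidem₁, hidem₂,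
            hcounit₁', hcounit₂']
          simp only [Algebra.algebraMap_eq_smul_one, smul_mul_assoc, mul_smul_comm,
            one_mul, mul_one]
    have e : π₂ y * π₁ x = LinearMap.mul' k H (TensorProduct.map π₁ π₂
        (Coalgebra.comul (R := k) (π₂ y * π₁ x))) := (hconv' _).symm
    rw [e, Bialgebra.comul_mul, hcomul₂' y, hcomul₁' x, key, ← hcomul₁' x, ← hcomul₂' y,
      ← Bialgebra.comul_mul, hconv']
  have hcommAL : ∀ a ∈ A, ∀ l ∈ L, a * l = l * a := by
    rintro a ⟨x, rfl⟩ l ⟨y, rfl⟩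
    exact hcomm x y
  -- comultiplication stability
  have hmapIncl₁ : ∀ u : H ⊗[k] H, TensorProduct.map π₁ π₁ u ∈
      LinearMap.range (TensorProduct.mapIncl (Subalgebra.toSubmodule A)
        (Subalgebra.toSubmodule A)) := by
    intro u
    induction u using TensorProduct.induction_on with
    | zero => exact zero_mem _
    | add u₁ u₂ h₁ h₂ => rw [map_add]; exact add_mem h₁ h₂
    | tmul x y =>
      exact ⟨⟨π₁ x, ⟨x, rfl⟩⟩ ⊗ₜ ⟨π₁ y, ⟨y, rfl⟩⟩, rfl⟩
  have hmapIncl₂ : ∀ u : H ⊗[k] H, TensorProduct.map π₂ π₂ u ∈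
      LinearMap.range (TensorProduct.mapIncl (Subalgebra.toSubmodule L)
        (Subalgebra.toSubmodule L)) := by
    intro u
    induction u using TensorProduct.induction_on with
    | zero => exact zero_mem _
    | add u₁ u₂ h₁ h₂ => rw [map_add]; exact add_mem h₁ h₂
    | tmul x y =>
      exact ⟨⟨π₂ x, ⟨x, rfl⟩⟩ ⊗ₜ ⟨π₂ y, ⟨y, rfl⟩⟩, rfl⟩
  have hcomulA : ∀ a ∈ A, Coalgebra.comul (R := k) a ∈
      LinearMap.range (TensorProduct.mapIncl (Subalgebra.toSubmodule A)
        (Subalgebra.toSubmodule A)) := by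
    rintro a ⟨x, rfl⟩
    have hx : f₁.toRingHom x = π₁ x := rfl
    rw [hx, hcomul₁']
    exact hmapIncl₁ _
  have hcomulL : ∀ a ∈ L, Coalgebra.comul (R := k) a ∈
      LinearMap.range (TensorProduct.mapIncl (Subalgebra.toSubmodule L)
        (Subalgebra.toSubmodule L)) := by
    rintro a ⟨x, rfl⟩
    have hx : f₂.toRingHom x = π₂ x := rfl
    rw [hx, hcomul₂']
    exact hmapIncl₂ _
  -- A * L = ⊤
  have hALtop : Subalgebra.toSubmodule A * Subalgebra.toSubmodule L = ⊤ := by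
    rw [eq_top_iff]
    rintro h -
    have e : h = LinearMap.mul' k H (TensorProduct.map π₁ π₂
        (Coalgebra.comul (R := k) h)) := (hconv' h).symm
    rw [e]
    generalize Coalgebra.comul (R := k) h = u
    induction u using TensorProduct.induction_on with
    | zero => simpa using zero_mem _
    | add u₁ u₂ h₁ h₂ => rw [map_add, map_add]; exact add_mem h₁ h₂
    | tmul x y =>
      refine Submodule.mul_mem_mul ?_ ?_
      · show π₁ x ∈ A
        exact ⟨x, rfl⟩
      · show π₂ y ∈ L
        exact ⟨y, rfl⟩
  -- adjR stability for A
  have FaTmul : ∀ (a u v : H), (TensorProduct.lift (((LinearMap.mul k H).comp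
      (LinearMap.mulRight k a)).compl₂ (HopfAlgebra.antipode (R := k)))) (u ⊗ₜ[k] v) =
      u * a * HopfAlgebra.antipode (R := k) v := by
    intro a u v; rfl
  have FrTmul : ∀ (a u v : H), (TensorProduct.lift ((LinearMap.mul k H).comp
      ((LinearMap.mulRight k a).comp (HopfAlgebra.antipode (R := k))))) (u ⊗ₜ[k] v) =
      HopfAlgebra.antipode (R := k) u * a * v := by
    intro a u v; rfl
  have hadjR_A : ∀ a ∈ A, ∀ h : H, adjR k a h ∈ A := by
    intro a ha h
    have hh : h ∈ Subalgebra.toSubmodule A * Subalgebra.toSubmodule L := by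
      rw [hALtop]; trivial
    refine Submodule.mul_induction_on hh ?_ (fun x y hx hy => by
      rw [show adjR k a (x + y) = adjR k a x + adjR k a y from map_add _ _ _]
      exact add_mem hx hy)
    intro b hb l hl
    rw [Subalgebra.mem_toSubmodule] at hb hl
    set Fr := TensorProduct.lift ((LinearMap.mul k H).comp
      ((LinearMap.mulRight k a).comp (HopfAlgebra.antipode (R := k)))) with hFr
    have claim : ∀ w : (↥(Subalgebra.toSubmodule A)) ⊗[k] ↥(Subalgebra.toSubmodule A),
        Fr (TensorProduct.mapIncl (Subalgebra.toSubmodule A) (Subalgebra.toSubmodule A) w *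
          Coalgebra.comul (R := k) l) ∈ A := by
      intro w
      induction w using TensorProduct.induction_on with
      | zero => rw [map_zero, zero_mul, map_zero]; exact Subalgebra.zero_mem _
      | add w₁ w₂ h₁ h₂ => rw [map_add, add_mul, map_add]; exact add_mem h₁ h₂
      | tmul p q =>
        have inner : ∀ v : (↥(Subalgebra.toSubmodule L)) ⊗[k] ↥(Subalgebra.toSubmodule L),
            Fr (((p : H) ⊗ₜ[k] (q : H)) *
              TensorProduct.mapIncl (Subalgebra.toSubmodule L) (Subalgebra.toSubmodule L) v) =
            (HopfAlgebra.antipode (R := k) (p : H) * a * (q : H)) *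
              LinearMap.mul' k H ((HopfAlgebra.antipode (R := k)).rTensor H
                (TensorProduct.mapIncl (Subalgebra.toSubmodule L)
                  (Subalgebra.toSubmodule L) v)) := by
          intro v
          induction v using TensorProduct.induction_on with
          | zero => simp
          | add v₁ v₂ h₁ h₂ =>
            rw [map_add, mul_add, map_add, map_add, map_add, mul_add, h₁, h₂]
          | tmul r s =>
            have hmi : TensorProduct.mapIncl (Subalgebra.toSubmodule L)
                (Subalgebra.toSubmodule L) (r ⊗ₜ[k] s) = (r : H) ⊗ₜ[k] (s : H) := rfl
            rw [hmi, Algebra.TensorProduct.tmul_mul_tmul, FrTmul,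
              Stmt8Aux.antipode_mul_rev, LinearMap.rTensor_tmul, LinearMap.mul'_apply]
            have hc : (HopfAlgebra.antipode (R := k) (p : H) * a * (q : H)) *
                HopfAlgebra.antipode (R := k) (r : H) =
                HopfAlgebra.antipode (R := k) (r : H) *
                (HopfAlgebra.antipode (R := k) (p : H) * a * (q : H)) :=
              hcommAL _ (mul_mem (mul_mem (hSA _ p.2) ha) q.2) _ (hSL _ r.2)
            rw [show (HopfAlgebra.antipode (R := k) (p:H) * a * (q:H)) *
                (HopfAlgebra.antipode (R := k) (r:H) * (s:H)) =
                ((HopfAlgebra.antipode (R := k) (p:H) * a * (q:H)) *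
                HopfAlgebra.antipode (R := k) (r:H)) * (s:H) from (mul_assoc _ _ _).symm, hc]
            simp [mul_assoc]
        obtain ⟨wl, hwl⟩ := hcomulL l hl
        have hmi : TensorProduct.mapIncl (Subalgebra.toSubmodule A)
            (Subalgebra.toSubmodule A) (p ⊗ₜ[k] q) = (p : H) ⊗ₜ[k] (q : H) := rfl
        rw [hmi, ← hwl, inner wl, hwl, HopfAlgebra.mul_antipode_rTensor_comul_apply]
        exact mul_mem (mul_mem (mul_mem (hSA _ p.2) ha) q.2) (Subalgebra.algebraMap_mem _ _)
    obtain ⟨wb, hwb⟩ := hcomulA b hb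
    have e : adjR k a (b * l) = Fr (Coalgebra.comul (R := k) (b * l)) := rfl
    rw [e, Bialgebra.comul_mul, ← hwb]
    exact claim wb
  have hadjR_L : ∀ a ∈ L, ∀ h : H, adjR k a h ∈ L := by
    intro a ha h
    have hh : h ∈ Subalgebra.toSubmodule A * Subalgebra.toSubmodule L := by
      rw [hALtop]; trivial
    refine Submodule.mul_induction_on hh ?_ (fun x y hx hy => by
      rw [show adjR k a (x + y) = adjR k a x + adjR k a y from map_add _ _ _]
      exact add_mem hx hy)
    intro b hb l hl
    rw [Subalgebra.mem_toSubmodule] at hb hl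
    set Fr := TensorProduct.lift ((LinearMap.mul k H).comp
      ((LinearMap.mulRight k a).comp (HopfAlgebra.antipode (R := k)))) with hFr
    have claim : ∀ v : (↥(Subalgebra.toSubmodule L)) ⊗[k] ↥(Subalgebra.toSubmodule L),
        Fr (Coalgebra.comul (R := k) b *
          TensorProduct.mapIncl (Subalgebra.toSubmodule L) (Subalgebra.toSubmodule L) v) ∈ L := by
      intro v
      induction v using TensorProduct.induction_on with
      | zero => rw [map_zero, mul_zero, map_zero]; exact Subalgebra.zero_mem _
      | add v₁ v₂ h₁ h₂ => rw [map_add, mul_add, map_add]; exact add_mem h₁ h₂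
      | tmul r s =>
        have inner : ∀ w : (↥(Subalgebra.toSubmodule A)) ⊗[k] ↥(Subalgebra.toSubmodule A),
            Fr (TensorProduct.mapIncl (Subalgebra.toSubmodule A) (Subalgebra.toSubmodule A) w *
              ((r : H) ⊗ₜ[k] (s : H))) =
            HopfAlgebra.antipode (R := k) (r : H) * (a *
              (LinearMap.mul' k H ((HopfAlgebra.antipode (R := k)).rTensor H
                (TensorProduct.mapIncl (Subalgebra.toSubmodule A)
                  (Subalgebra.toSubmodule A) w)) * (s : H))) := by
          intro w
          induction w using TensorProduct.induction_on with
          | zero => simp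
          | add w₁ w₂ h₁ h₂ =>
            rw [map_add, add_mul, map_add, map_add, map_add, add_mul, mul_add, mul_add, h₁, h₂]
          | tmul p q =>
            have hmi : TensorProduct.mapIncl (Subalgebra.toSubmodule A)
                (Subalgebra.toSubmodule A) (p ⊗ₜ[k] q) = (p : H) ⊗ₜ[k] (q : H) := rfl
            rw [hmi, Algebra.TensorProduct.tmul_mul_tmul, FrTmul,
              Stmt8Aux.antipode_mul_rev, LinearMap.rTensor_tmul, LinearMap.mul'_apply]
            have hc : HopfAlgebra.antipode (R := k) (p : H) * a =
                a * HopfAlgebra.antipode (R := k) (p : H) :=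
              hcommAL _ (hSA _ p.2) _ ha
            calc HopfAlgebra.antipode (R := k) (r:H) * HopfAlgebra.antipode (R := k) (p:H) * a *
                  ((q:H) * (s:H))
                = HopfAlgebra.antipode (R := k) (r:H) *
                    ((HopfAlgebra.antipode (R := k) (p:H) * a) * ((q:H) * (s:H))) := by
                  simp [mul_assoc]
              _ = HopfAlgebra.antipode (R := k) (r:H) *
                    ((a * HopfAlgebra.antipode (R := k) (p:H)) * ((q:H) * (s:H))) := by rw [hc]
              _ = _ := by simp [mul_assoc]
        obtain ⟨wb, hwb⟩ := hcomulA b hb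
        have hmi : TensorProduct.mapIncl (Subalgebra.toSubmodule L)
            (Subalgebra.toSubmodule L) (r ⊗ₜ[k] s) = (r : H) ⊗ₜ[k] (s : H) := rfl
        rw [hmi, ← hwb, inner wb, hwb, HopfAlgebra.mul_antipode_rTensor_comul_apply]
        refine mul_mem (hSL _ r.2) (mul_mem ha (mul_mem ?_ s.2))
        exact Subalgebra.algebraMap_mem _ _
    obtain ⟨wl, hwl⟩ := hcomulL l hl
    have e : adjR k a (b * l) = Fr (Coalgebra.comul (R := k) (b * l)) := rfl
    rw [e, Bialgebra.comul_mul, ← hwl]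
    exact claim wl
  have hadjL_A : ∀ a ∈ A, ∀ h : H, adjL k a h ∈ A := by
    rintro a ⟨x, rfl⟩ h
    exact ⟨adjL k x h, hn₁ h x⟩
  have hadjL_L : ∀ a ∈ L, ∀ h : H, adjL k a h ∈ L := by
    rintro a ⟨x, rfl⟩ h
    exact ⟨adjL k x h, hn₂ h x⟩
  have hinf : A ⊓ L = ⊥ := by
    refine le_antisymm ?_ (le_inf bot_le bot_le)
    intro x hx
    obtain ⟨hxA, hxL⟩ := hx
    obtain ⟨y, hy⟩ := hxA
    obtain ⟨z, hz⟩ := hxL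
    have hy' : π₁ y = x := hy
    have hz' : π₂ z = x := hz
    have h1 : π₂ x = x := by rw [← hz']; exact hidem₂ z
    have h2 : π₂ x = algebraMap k H (Coalgebra.counit (R := k) x) := by
      conv_lhs => rw [← hy']
      rw [hcross₂, ← hy', hcounit₁' y]
    rw [Algebra.mem_bot]
    exact ⟨Coalgebra.counit (R := k) x, by rw [← h2, h1]⟩
  have hkey : ∀ t : (↥(Subalgebra.toSubmodule A)) ⊗[k] ↥(Subalgebra.toSubmodule L),
      TensorProduct.map π₁ π₂ (Coalgebra.comul (R := k) ((LinearMap.mul' k H)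
        (TensorProduct.mapIncl (Subalgebra.toSubmodule A) (Subalgebra.toSubmodule L) t))) =
      TensorProduct.mapIncl (Subalgebra.toSubmodule A) (Subalgebra.toSubmodule L) t := by
    intro t
    induction t using TensorProduct.induction_on with
    | zero => simp
    | add t₁ t₂ h₁ h₂ => simp only [map_add, h₁, h₂]
    | tmul p q =>
      have hmi : TensorProduct.mapIncl (Subalgebra.toSubmodule A)
          (Subalgebra.toSubmodule L) (p ⊗ₜ[k] q) = (p : H) ⊗ₜ[k] (q : H) := rfl
      rw [hmi, LinearMap.mul'_apply]
      obtain ⟨x, hx⟩ := p.2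
      obtain ⟨y, hy⟩ := q.2
      have hx' : π₁ x = (p : H) := hx
      have hy' : π₂ y = (q : H) := hy
      rw [← hx', ← hy', Bialgebra.comul_mul, hcomul₁' x, hcomul₂' y, ← (ℛ k x).eq, ← (ℛ k y).eq]
      rw [map_sum, map_sum, Finset.sum_mul_sum]
      simp only [map_sum]
      have hterm : ∀ i ∈ (ℛ k x).index, ∀ j ∈ (ℛ k y).index,
          TensorProduct.map π₁ π₂
            ((TensorProduct.map π₁ π₁ ((ℛ k x).left i ⊗ₜ[k] (ℛ k x).right i)) *
             (TensorProduct.map π₂ π₂ ((ℛ k y).left j ⊗ₜ[k] (ℛ k y).right j))) =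
          (Coalgebra.counit (R := k) ((ℛ k x).right i) • π₁ ((ℛ k x).left i)) ⊗ₜ[k]
            (Coalgebra.counit (R := k) ((ℛ k y).left j) • π₂ ((ℛ k y).right j)) := by
        intro i _ j _
        rw [TensorProduct.map_tmul, TensorProduct.map_tmul,
          Algebra.TensorProduct.tmul_mul_tmul, TensorProduct.map_tmul]
        rw [hmul₁, hmul₂, hidem₁, hidem₂, hcross₁, hcross₂]
        rw [Algebra.algebraMap_eq_smul_one, Algebra.algebraMap_eq_smul_one,
          mul_smul_comm, mul_one, smul_mul_assoc, one_mul]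
        rw [TensorProduct.smul_tmul, TensorProduct.smul_tmul, smul_smul, smul_smul, mul_comm]
      calc ∑ i ∈ (ℛ k x).index, ∑ j ∈ (ℛ k y).index, TensorProduct.map π₁ π₂
            ((TensorProduct.map π₁ π₁ ((ℛ k x).left i ⊗ₜ[k] (ℛ k x).right i)) *
             (TensorProduct.map π₂ π₂ ((ℛ k y).left j ⊗ₜ[k] (ℛ k y).right j)))
          = ∑ i ∈ (ℛ k x).index, ∑ j ∈ (ℛ k y).index,
            (Coalgebra.counit (R := k) ((ℛ k x).right i) • π₁ ((ℛ k x).left i)) ⊗ₜ[k]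
              (Coalgebra.counit (R := k) ((ℛ k y).left j) • π₂ ((ℛ k y).right j)) := by
            refine Finset.sum_congr rfl fun i hi => Finset.sum_congr rfl fun j hj => ?_
            exact hterm i hi j hj
        _ = (∑ i ∈ (ℛ k x).index, Coalgebra.counit (R := k) ((ℛ k x).right i) •
              π₁ ((ℛ k x).left i)) ⊗ₜ[k]
            (∑ j ∈ (ℛ k y).index, Coalgebra.counit (R := k) ((ℛ k y).left j) •
              π₂ ((ℛ k y).right j)) := by
            rw [TensorProduct.sum_tmul]
            exact Finset.sum_congr rfl fun i _ => by rw [TensorProduct.tmul_sum]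
        _ = π₁ x ⊗ₜ[k] π₂ y := by
            rw [Stmt8Aux.sum_counit_smul_right π₁ x (ℛ k x),
              Stmt8Aux.sum_counit_smul_left π₂ y (ℛ k y)]
  have hIncInj : Function.Injective (TensorProduct.mapIncl (Subalgebra.toSubmodule A)
      (Subalgebra.toSubmodule L)) := by
    have h1 : Function.Injective ((Subalgebra.toSubmodule A).subtype.rTensor
        (↥(Subalgebra.toSubmodule L))) :=
      Module.Flat.rTensor_preserves_injective_linearMap _ (Submodule.injective_subtype _)
    have h2 : Function.Injective ((Subalgebra.toSubmodule L).subtype.lTensor H) :=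
      Module.Flat.lTensor_preserves_injective_linearMap _ (Submodule.injective_subtype _)
    have heq : TensorProduct.mapIncl (Subalgebra.toSubmodule A) (Subalgebra.toSubmodule L) =
        ((Subalgebra.toSubmodule L).subtype.lTensor H) ∘ₗ
          ((Subalgebra.toSubmodule A).subtype.rTensor (↥(Subalgebra.toSubmodule L))) := by
      rw [LinearMap.lTensor_comp_rTensor]
    rw [heq]
    exact h2.comp h1
  have hbij : Function.Bijective ((LinearMap.mul' k H).comp
      (TensorProduct.mapIncl (Subalgebra.toSubmodule A) (Subalgebra.toSubmodule L))) := by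
    constructor
    · intro t t' htt
      apply hIncInj
      rw [← hkey t, ← hkey t']
      simp only [LinearMap.comp_apply] at htt
      rw [htt]
    · intro h
      have hh : h ∈ Subalgebra.toSubmodule A * Subalgebra.toSubmodule L := by
        rw [hALtop]; trivial
      refine Submodule.mul_induction_on hh ?_ ?_
      · intro aa haa ll hll
        exact ⟨⟨aa, haa⟩ ⊗ₜ ⟨ll, hll⟩, rfl⟩
      · rintro z w ⟨t, rfl⟩ ⟨t', rfl⟩
        exact ⟨t + t', by rw [map_add]⟩
  refine ⟨A, L, ?_, ?_, ⟨⟨hcomulA, hSA⟩, fun a ha h => ⟨hadjL_A a ha h, hadjR_A a ha h⟩⟩,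
    ⟨⟨hcomulL, hSL⟩, fun a ha h => ⟨hadjL_L a ha h, hadjR_L a ha h⟩⟩,
    hinf, hALtop, hbij, hcommAL⟩
  · rw [hA, AlgHom.coe_range]
    rfl
  · rw [hL, AlgHom.coe_range]
    rfl
end
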